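/- arXiv:math/9903002 — 4 statements merged into one kernel-verified Lean document; each statement's English description precedes it below -/
import Mathlib

section
/- Let M be a real analytic manifold, Γ a group acting on M by real analytic diffeomorphisms via ρ: Γ → Diff^ω(M), with a fixed point x₀, and let r: Γ → GL(T_{x₀}M) be the infinitesimal representation at x₀. Suppose ρ is analytically linearizable at x₀, i.e. there is a real analytic diffeomorphism φ: U → V from an open neighborhood U of 0 in T_{x₀}M onto an open neighborhood V of x₀ with φ(0)=x₀ such that for every γ ∈ Γ one has φ∘r(γ) = ρ(γ)∘φ on some neighborhood of 0 (depending on γ). Then among all open subsets of T_{x₀}M that are star-shaped with respect to 0 and on which φ extends analytically to a local diffeomorphism onto its image, there is a unique maximal one ℰ; this ℰ is invariant under r, and the extension φ̄ of φ to ℰ satisfies the global semi-conjugacy φ̄(r(γ)u) = ρ(γ)(φ̄(u)) for all γ ∈ Γ and all u ∈ ℰ. -/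
open Set Filter Topology MeasureTheory Matrix Function
noncomputable section
namespace Zeghib

/-- `ℝⁿ` (with the sup norm; the choice of norm is irrelevant). -/
abbrev V (n : ℕ) : Type := Fin n → ℝ

section Charted

variable (E : Type*) [NormedAddCommGroup E] [NormedSpace ℝ E]
variable (E' : Type*) [NormedAddCommGroup E'] [NormedSpace ℝ E']
variable {M : Type*} [TopologicalSpace M] [ChartedSpace E M]
variable {M' : Type*} [TopologicalSpace M'] [ChartedSpace E' M']

/-- A map between charted spaces (over real normed vector spaces) is real analytic at a
point if it is continuous there and its representative in the preferred charts is
real analytic. -/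
def CAnalyticAt (f : M → M') (x : M) : Prop :=
  ContinuousAt f x ∧
    AnalyticAt ℝ ((chartAt E' (f x)) ∘ f ∘ (chartAt E x).symm) (chartAt E x x)

def CAnalyticOn (f : M → M') (s : Set M) : Prop := ∀ x ∈ s, CAnalyticAt E E' f x

def CAnalytic (f : M → M') : Prop := ∀ x, CAnalyticAt E E' f x

/-- A charted space is a real analytic manifold when all its transition maps are
real analytic. -/
def AnalyticCharts (M : Type*) [TopologicalSpace M] [ChartedSpace E M] : Prop :=
  ∀ x y : M, ∀ z ∈ ((chartAt E x).symm.trans (chartAt E y)).source,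
    AnalyticAt ℝ ((chartAt E y) ∘ (chartAt E x).symm) z

/-- `f` is, on `s`, a local analytic diffeomorphism (onto its image). -/
def LocalAnaDiffeoOn (f : M → M') (s : Set M) : Prop :=
  ∀ x ∈ s, ∃ U : Set M, IsOpen U ∧ x ∈ U ∧ U ⊆ s ∧ InjOn f U ∧ IsOpen (f '' U) ∧
    CAnalyticOn E E' f U ∧ ∃ g : M' → M, LeftInvOn g f U ∧ CAnalyticOn E' E g (f '' U)

/-- `f` restricted to `s` is a covering map onto its image. -/
def IsCoveringOntoImage (f : M → M') (s : Set M) : Prop :=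
  ∀ y ∈ f '' s, ∃ W : Set M', IsOpen W ∧ y ∈ W ∧
    ∃ (ι : Type) (U : ι → Set M), (∀ i, IsOpen (U i)) ∧
      Pairwise (Function.onFun Disjoint U) ∧ (s ∩ f ⁻¹' W = ⋃ i, U i) ∧
      ∀ i, BijOn f (U i) W

/-- An equivalence which is a real analytic diffeomorphism. -/
def IsAnaDiffeo (h : M ≃ M') : Prop := CAnalytic E E' h ∧ CAnalytic E' E h.symm

end Charted

/-- Star-shapedness with respect to the origin. -/
def StarShapedZero {n : ℕ} (s : Set (V n)) : Prop :=
  ∀ u ∈ s, ∀ t ∈ Icc (0:ℝ) 1, t • u ∈ s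

/-- `φ` extends, from a neighborhood of `0`, to an analytic local diffeomorphism
(onto its image) defined on `s`. -/
def ExtendsAsLocalAnaDiffeo {n : ℕ} {M : Type*} [TopologicalSpace M] [ChartedSpace (V n) M]
    (φ : V n → M) (s : Set (V n)) : Prop :=
  ∃ ψ : V n → M, (∀ᶠ u in 𝓝 (0 : V n), ψ u = φ u) ∧ LocalAnaDiffeoOn (V n) (V n) ψ s

/-- `(ℳ, Φ)` is an extension of the germ of the linearizing map `φ` to a connected
`r`-invariant open neighborhood `ℳ` of `0`, as an analytic local diffeomorphism
semi-conjugating the linear action `r` to the action `ρ`. -/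
def GoodExt {n : ℕ} {Γ : Type*} {M : Type*} [TopologicalSpace M] [ChartedSpace (V n) M]
    (r : Γ → V n → V n) (ρ : Γ → M → M) (φ : V n → M)
    (ℳ : Set (V n)) (Φ : V n → M) : Prop :=
  IsOpen ℳ ∧ IsConnected ℳ ∧ (0 : V n) ∈ ℳ ∧
  (∀ γ, ∀ u ∈ ℳ, r γ u ∈ ℳ) ∧
  (∀ᶠ u in 𝓝 (0 : V n), Φ u = φ u) ∧
  LocalAnaDiffeoOn (V n) (V n) Φ ℳ ∧
  (∀ γ, ∀ u ∈ ℳ, Φ (r γ u) = ρ γ (Φ u))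

/-- `φ` is an analytic diffeomorphism from an open neighborhood of `0 ∈ ℝⁿ` onto an open
neighborhood of its image, sending `0` to `x₀`. -/
def IsLocalLinearization {n : ℕ} {M : Type*} [TopologicalSpace M] [ChartedSpace (V n) M]
    (φ : V n → M) (x₀ : M) : Prop :=
  φ 0 = x₀ ∧
  ∃ U : Set (V n), IsOpen U ∧ (0 : V n) ∈ U ∧ InjOn φ U ∧ IsOpen (φ '' U) ∧
    CAnalyticOn (V n) (V n) φ U ∧
    ∃ ψ : M → V n, LeftInvOn ψ φ U ∧ CAnalyticOn (V n) (V n) ψ (φ '' U)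

section Aux

variable {n : ℕ} {M : Type*} [TopologicalSpace M] [ChartedSpace (V n) M]

lemma canalyticAt_self_iff {f : V n → V n} {x : V n} :
    CAnalyticAt (V n) (V n) f x ↔ AnalyticAt ℝ f x := by
  constructor
  · intro h
    have := h.2
    simpa [chartAt_self_eq] using this
  · intro h
    refine ⟨h.continuousAt, ?_⟩
    simpa [chartAt_self_eq] using h

lemma canalyticAt_comp {E E' E'' : Type*} [NormedAddCommGroup E] [NormedSpace ℝ E]
    [NormedAddCommGroup E'] [NormedSpace ℝ E'] [NormedAddCommGroup E''] [NormedSpace ℝ E'']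
    {N : Type*} [TopologicalSpace N] [ChartedSpace E N]
    {N' : Type*} [TopologicalSpace N'] [ChartedSpace E' N']
    {N'' : Type*} [TopologicalSpace N''] [ChartedSpace E'' N'']
    {f : N → N'} {g : N' → N''} {x : N}
    (hg : CAnalyticAt E' E'' g (f x)) (hf : CAnalyticAt E E' f x) :
    CAnalyticAt E E'' (g ∘ f) x := by
  refine ⟨hg.1.comp hf.1, ?_⟩
  have h2 : AnalyticAt ℝ ((chartAt E' (f x)) ∘ f ∘ (chartAt E x).symm) (chartAt E x x) := hf.2
  have hval : ((chartAt E' (f x)) ∘ f ∘ (chartAt E x).symm) (chartAt E x x)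
      = chartAt E' (f x) (f x) := by
    simp [Function.comp, (chartAt E x).left_inv (mem_chart_source E x)]
  have h1 : AnalyticAt ℝ ((chartAt E'' (g (f x))) ∘ g ∘ (chartAt E' (f x)).symm)
      (((chartAt E' (f x)) ∘ f ∘ (chartAt E x).symm) (chartAt E x x)) := hval ▸ hg.2
  have hcomp := h1.comp h2
  apply hcomp.congr
  have hc : ContinuousAt (fun z => f ((chartAt E x).symm z)) (chartAt E x x) := by
    have h3 : ContinuousAt (chartAt E x).symm (chartAt E x x) :=
      (chartAt E x).continuousAt_symm (mem_chart_target E x)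
    have h4 : (chartAt E x).symm (chartAt E x x) = x :=
      (chartAt E x).left_inv (mem_chart_source E x)
    have h5 : ContinuousAt f ((chartAt E x).symm (chartAt E x x)) := by rw [h4]; exact hf.1
    exact h5.comp h3
  have hev : ∀ᶠ z in 𝓝 (chartAt E x x), f ((chartAt E x).symm z) ∈ (chartAt E' (f x)).source := by
    apply hc
    apply (chartAt E' (f x)).open_source.mem_nhds
    simpa [(chartAt E x).left_inv (mem_chart_source E x)] using mem_chart_source E' (f x)
  filter_upwards [hev] with z hz
  simp only [Function.comp_apply]
  rw [(chartAt E' (f x)).left_inv hz]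

lemma canalyticAt_congr {f g : V n → M} {x : V n}
    (hf : CAnalyticAt (V n) (V n) f x) (h : g =ᶠ[𝓝 x] f) :
    CAnalyticAt (V n) (V n) g x := by
  have hx : g x = f x := h.eq_of_nhds
  refine ⟨hf.1.congr h.symm, ?_⟩
  have h2 : AnalyticAt ℝ ((chartAt (V n) (f x)) ∘ f) x := by
    simpa [chartAt_self_eq] using hf.2
  have h3 : AnalyticAt ℝ ((chartAt (V n) (f x)) ∘ g) x := by
    apply h2.congr
    filter_upwards [h] with z hz
    simp [Function.comp, hz]
  simpa [chartAt_self_eq, hx] using h3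

lemma eqOn_of_canalytic [T2Space M] {s : Set (V n)} (hs : IsOpen s) (hconn : IsPreconnected s)
    {f g : V n → M} (hf : ∀ u ∈ s, CAnalyticAt (V n) (V n) f u)
    (hg : ∀ u ∈ s, CAnalyticAt (V n) (V n) g u)
    {z₀ : V n} (hz : z₀ ∈ s) (heq : f =ᶠ[𝓝 z₀] g) : EqOn f g s := by
  have key : s ⊆ {u | f =ᶠ[𝓝 u] g} := by
    apply hconn.subset_of_closure_inter_subset isOpen_setOf_eventually_nhds ⟨z₀, hz, heq⟩
    rintro u ⟨huc, hus⟩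
    have hfc := (hf u hus).1
    have hgc := (hg u hus).1
    have hfgu : f u = g u := by
      by_contra hne
      obtain ⟨U1, U2, hU1, hU2, hd⟩ := t2_separation_nhds hne
      obtain ⟨v, hvN, hvA⟩ := mem_closure_iff_nhds.1 huc _ (inter_mem (hfc hU1) (hgc hU2))
      have hvA' : f =ᶠ[𝓝 v] g := hvA
      have hveq : f v = g v := hvA'.eq_of_nhds
      exact Set.disjoint_left.1 hd hvN.1 (hveq ▸ hvN.2)
    set c := chartAt (V n) (f u) with hc
    have hF : AnalyticAt ℝ (⇑c ∘ f) u := by simpa [chartAt_self_eq] using (hf u hus).2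
    have hG : AnalyticAt ℝ (⇑c ∘ g) u := by
      have := (hg u hus).2
      simp only [chartAt_self_eq] at this
      rw [show chartAt (V n) (g u) = c by rw [hc, hfgu]] at this
      simpa using this
    have hsrc : ∀ᶠ v in 𝓝 u, f v ∈ c.source ∧ g v ∈ c.source := by
      have h1 : ∀ᶠ v in 𝓝 u, f v ∈ c.source :=
        hfc (c.open_source.mem_nhds (mem_chart_source _ _))
      have h2 : ∀ᶠ v in 𝓝 u, g v ∈ c.source :=
        hgc (c.open_source.mem_nhds (by rw [hc, hfgu]; exact mem_chart_source _ _))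
      exact h1.and h2
    have hana : ∀ᶠ v in 𝓝 u, AnalyticAt ℝ (⇑c ∘ f) v ∧ AnalyticAt ℝ (⇑c ∘ g) v :=
      hF.eventually_analyticAt.and hG.eventually_analyticAt
    have hmem : ∀ᶠ v in 𝓝 u, v ∈ s := hs.mem_nhds hus
    obtain ⟨ε, hε, hball⟩ := Metric.mem_nhds_iff.1 ((hsrc.and hana).and hmem)
    obtain ⟨w, hwball, hwA⟩ := mem_closure_iff_nhds.1 huc _ (Metric.ball_mem_nhds u hε)
    have hFG : EqOn (⇑c ∘ f) (⇑c ∘ g) (Metric.ball u ε) := by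
      apply AnalyticOnNhd.eqOn_of_preconnected_of_eventuallyEq
        (fun v hv => ((hball hv).1.2).1) (fun v hv => ((hball hv).1.2).2)
        (convex_ball u ε).isPreconnected hwball
      have hwA' : f =ᶠ[𝓝 w] g := hwA
      filter_upwards [hwA'] with z hz
      simp [Function.comp, hz]
    have : ∀ᶠ v in 𝓝 u, f v = g v := by
      filter_upwards [Metric.ball_mem_nhds u hε] with v hv
      exact c.injOn ((hball hv).1.1).1 ((hball hv).1.1).2 (hFG hv)
    exact this
  intro u hu
  have h' : f =ᶠ[𝓝 u] g := key hu
  exact h'.eq_of_nhds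

lemma starShaped_preconnected {s : Set (V n)} (h : StarShapedZero s) :
    IsPreconnected s := by
  apply isPreconnected_of_forall (0 : V n)
  intro y hy
  refine ⟨(fun t : ℝ => t • y) '' Icc 0 1, ?_, ⟨0, ⟨le_refl _, zero_le_one⟩, by simp⟩,
    ⟨1, ⟨zero_le_one, le_refl _⟩, by simp⟩, isPreconnected_Icc.image _ ?_⟩
  · rintro _ ⟨t, ht, rfl⟩; exact h y hy t ht
  · exact (continuous_id.smul continuous_const).continuousOn

-- mdifferentiable from analytic in charts
lemma canalyticAt_mdiff {f : M → M} {x : M} (h : CAnalyticAt (V n) (V n) f x) :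
    MDifferentiableAt (modelWithCornersSelf ℝ (V n)) (modelWithCornersSelf ℝ (V n)) f x := by
  rw [mdifferentiableAt_iff]
  refine ⟨h.1, ?_⟩
  simp only [writtenInExtChartAt, extChartAt, OpenPartialHomeomorph.extend,
    modelWithCornersSelf_partialEquiv, PartialEquiv.trans_refl, modelWithCornersSelf_coe, range_id]
  exact h.2.differentiableAt.differentiableWithinAt

end Aux

/-- Let `Γ` act real-analytically on a real analytic manifold `M` with a
fixed point `x₀`, with infinitesimal representation `r` at `x₀`, and suppose the action is
analytically linearizable at `x₀` via `φ`. Then among the star-shaped (with respect to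
`0`) open subsets of `T_{x₀}M = ℝⁿ` on which `φ` extends analytically to a local
diffeomorphism onto its image there is a greatest one `ℰ`; it is `r`-invariant and the
extension `φ̄` of `φ` to `ℰ` globally semi-conjugates `r` to `ρ`. -/
theorem statement_0 (n : ℕ) (Γ : Type*) [Group Γ]
    (M : Type*) [TopologicalSpace M] [T2Space M] [ChartedSpace (V n) M]
    (hM : AnalyticCharts (V n) M)
    (ρ : Γ →* Equiv.Perm M) (hρ : ∀ γ : Γ, CAnalytic (V n) (V n) ⇑(ρ γ))
    (x₀ : M) (hfix : ∀ γ : Γ, ρ γ x₀ = x₀)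
    (r : Γ → V n → V n)
    (hr : ∀ γ : Γ, r γ = fun u =>
      mfderiv (modelWithCornersSelf ℝ (V n)) (modelWithCornersSelf ℝ (V n)) (ρ γ) x₀ u)
    (φ : V n → M) (hφ : IsLocalLinearization φ x₀)
    (hconj : ∀ γ : Γ, ∀ᶠ u in 𝓝 (0 : V n), φ (r γ u) = ρ γ (φ u)) :
    ∃ ℰ : Set (V n),
      (StarShapedZero ℰ ∧ IsOpen ℰ ∧ (0 : V n) ∈ ℰ ∧ ExtendsAsLocalAnaDiffeo φ ℰ) ∧
      (∀ ℰ' : Set (V n), StarShapedZero ℰ' → IsOpen ℰ' → (0 : V n) ∈ ℰ' →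
        ExtendsAsLocalAnaDiffeo φ ℰ' → ℰ' ⊆ ℰ) ∧
      (∀ γ : Γ, ∀ u ∈ ℰ, r γ u ∈ ℰ) ∧
      ∃ φbar : V n → M, (∀ᶠ u in 𝓝 (0 : V n), φbar u = φ u) ∧
        LocalAnaDiffeoOn (V n) (V n) φbar ℰ ∧
        ∀ γ : Γ, ∀ u ∈ ℰ, φbar (r γ u) = ρ γ (φbar u) := by

  classical
  obtain ⟨hφ0, U₀, hU₀o, hU₀0, hinj₀, himg₀, hana₀, ψ₀, hleft₀, hanaψ₀⟩ := hφ
  -- basic facts about ρ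
  have hρcont : ∀ γ : Γ, Continuous (⇑(ρ γ)) :=
    fun γ => continuous_iff_continuousAt.2 fun x => (hρ γ x).1
  have hρMD : ∀ (γ : Γ) (x : M), MDifferentiableAt (modelWithCornersSelf ℝ (V n))
      (modelWithCornersSelf ℝ (V n)) (⇑(ρ γ)) x := fun γ x => canalyticAt_mdiff (hρ γ x)
  have hρfun : ∀ γ δ : Γ, ⇑(ρ (γ * δ)) = (⇑(ρ γ)) ∘ (⇑(ρ δ)) := by
    intro γ δ; funext m; simp [_root_.map_mul]
  have hρinv : ∀ (γ : Γ) (m : M), ρ γ⁻¹ (ρ γ m) = m := by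
    intro γ m
    have h1 : (ρ γ⁻¹) ((ρ γ) m) = (ρ (γ⁻¹ * γ)) m := by rw [_root_.map_mul]; rfl
    rw [h1, inv_mul_cancel, _root_.map_one]; rfl
  -- basic facts about r
  have hrmul : ∀ γ δ : Γ, r (γ * δ) = r γ ∘ r δ := by
    intro γ δ
    funext u
    rw [hr, hr, hr]
    simp only [Function.comp]
    rw [hρfun γ δ]
    rw [mfderiv_comp x₀ (by rw [hfix δ]; exact hρMD γ x₀) (hρMD δ x₀)]
    simp only [ContinuousLinearMap.coe_comp', Function.comp_apply]
    congr 1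
    rw [hfix δ]
  have hrone : ∀ u : V n, r (1 : Γ) u = u := by
    intro u
    have h1 : ⇑(ρ (1 : Γ)) = (id : M → M) := by funext m; simp
    rw [hr]
    show (mfderiv (modelWithCornersSelf ℝ (V n)) (modelWithCornersSelf ℝ (V n))
      (⇑(ρ (1 : Γ))) x₀) u = u
    rw [h1, mfderiv_id]
    rfl
  have hrinv₁ : ∀ (γ : Γ) (u : V n), r γ (r γ⁻¹ u) = u := by
    intro γ u
    have h1 : r (γ * γ⁻¹) u = u := by rw [mul_inv_cancel]; exact hrone u
    rw [hrmul] at h1; exact h1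
  have hrinv₂ : ∀ (γ : Γ) (u : V n), r γ⁻¹ (r γ u) = u := by
    intro γ u
    have h1 : r (γ⁻¹ * γ) u = u := by rw [inv_mul_cancel]; exact hrone u
    rw [hrmul] at h1; exact h1
  have hrCLM : ∀ γ : Γ, ∃ L : (V n) →L[ℝ] (V n), r γ = ⇑L := by
    intro γ
    exact ⟨mfderiv (modelWithCornersSelf ℝ (V n)) (modelWithCornersSelf ℝ (V n)) (ρ γ) x₀,
      by rw [hr]; rfl⟩
  have hrsmul : ∀ (γ : Γ) (t : ℝ) (u : V n), r γ (t • u) = t • r γ u := by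
    intro γ t u; obtain ⟨L, hL⟩ := hrCLM γ; simp [hL]
  have hrzero : ∀ γ : Γ, r γ (0 : V n) = 0 := by
    intro γ; obtain ⟨L, hL⟩ := hrCLM γ; simp [hL]
  have hrcont : ∀ γ : Γ, Continuous (r γ) := by
    intro γ; obtain ⟨L, hL⟩ := hrCLM γ; rw [hL]; exact L.continuous
  have hranalytic : ∀ (γ : Γ) (x : V n), AnalyticAt ℝ (r γ) x := by
    intro γ x; obtain ⟨L, hL⟩ := hrCLM γ; rw [hL]; exact L.analyticAt x
  -- the family of admissible star-shaped sets
  set S : Set (Set (V n)) :=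
    {s | StarShapedZero s ∧ IsOpen s ∧ (0 : V n) ∈ s ∧ ExtendsAsLocalAnaDiffeo φ s} with hSdef
  have hSmem : ∀ s : Set (V n),
      s ∈ S ↔ StarShapedZero s ∧ IsOpen s ∧ (0 : V n) ∈ s ∧ ExtendsAsLocalAnaDiffeo φ s := by
    intro s; rw [hSdef]; exact Iff.rfl
  -- the base ball
  obtain ⟨ε, hε, hballU⟩ := Metric.isOpen_iff.1 hU₀o 0 hU₀0
  set B := Metric.ball (0 : V n) ε with hBdef
  have hBstar : StarShapedZero B := by
    intro u hu t ht
    rw [hBdef, mem_ball_zero_iff] at hu ⊢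
    calc ‖t • u‖ = ‖t‖ * ‖u‖ := norm_smul t u
    _ ≤ 1 * ‖u‖ := by
        apply mul_le_mul_of_nonneg_right _ (norm_nonneg u)
        rw [Real.norm_eq_abs, abs_le]; exact ⟨le_trans (by norm_num) ht.1, ht.2⟩
    _ = ‖u‖ := one_mul _
    _ < ε := hu
  have hBLAD : LocalAnaDiffeoOn (V n) (V n) φ B := by
    intro x hx
    have hψcont : ContinuousOn ψ₀ (φ '' U₀) := fun y hy => ((hanaψ₀ y hy).1).continuousWithinAt
    have himage : φ '' B = (φ '' U₀) ∩ ψ₀ ⁻¹' B := by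
      apply Subset.antisymm
      · rintro _ ⟨v, hv, rfl⟩
        exact ⟨mem_image_of_mem φ (hballU hv), by rw [mem_preimage, hleft₀ (hballU hv)]; exact hv⟩
      · rintro _ ⟨⟨v, hv, rfl⟩, hmem⟩
        rw [mem_preimage, hleft₀ hv] at hmem
        exact mem_image_of_mem φ hmem
    refine ⟨B, Metric.isOpen_ball, hx, subset_rfl, hinj₀.mono hballU, ?_,
      fun y hy => hana₀ y (hballU hy), ψ₀, hleft₀.mono hballU,
      fun y hy => hanaψ₀ y (image_mono (f := φ) hballU hy)⟩
    rw [himage]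
    exact hψcont.isOpen_inter_preimage himg₀ Metric.isOpen_ball
  have hBmem : B ∈ S := (hSmem B).2 ⟨hBstar, Metric.isOpen_ball, Metric.mem_ball_self hε,
    φ, Filter.Eventually.of_forall (fun _ => rfl), hBLAD⟩
  -- analyticity of local diffeos
  have hCA_of_LAD : ∀ (ψ : V n → M) (s : Set (V n)), LocalAnaDiffeoOn (V n) (V n) ψ s →
      ∀ u ∈ s, CAnalyticAt (V n) (V n) ψ u := by
    intro ψ s hL u hu
    obtain ⟨U, _, hxU, _, _, _, hana, _⟩ := hL u hu
    exact hana u hxU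
  -- gluing: any two admissible extensions agree on the intersection
  have hglue : ∀ s₁ s₂ : Set (V n), s₁ ∈ S → s₂ ∈ S → ∀ ψ₁ ψ₂ : V n → M,
      (ψ₁ =ᶠ[𝓝 (0 : V n)] φ) → LocalAnaDiffeoOn (V n) (V n) ψ₁ s₁ →
      (ψ₂ =ᶠ[𝓝 (0 : V n)] φ) → LocalAnaDiffeoOn (V n) (V n) ψ₂ s₂ →
      EqOn ψ₁ ψ₂ (s₁ ∩ s₂) := by
    intro s₁ s₂ hs₁ hs₂ ψ₁ ψ₂ he₁ hL₁ he₂ hL₂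
    obtain ⟨hst₁, ho₁, h0₁, -⟩ := (hSmem s₁).1 hs₁
    obtain ⟨hst₂, ho₂, h0₂, -⟩ := (hSmem s₂).1 hs₂
    exact eqOn_of_canalytic (ho₁.inter ho₂)
      (starShaped_preconnected (fun u hu t ht => ⟨hst₁ u hu.1 t ht, hst₂ u hu.2 t ht⟩))
      (fun u hu => hCA_of_LAD ψ₁ s₁ hL₁ u hu.1) (fun u hu => hCA_of_LAD ψ₂ s₂ hL₂ u hu.2)
      ⟨h0₁, h0₂⟩ (he₁.trans he₂.symm)
  -- choose extensions
  have hchoice : ∀ s ∈ S, ∃ ψ : V n → M, (∀ᶠ u in 𝓝 (0 : V n), ψ u = φ u) ∧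
      LocalAnaDiffeoOn (V n) (V n) ψ s := fun s hs => ((hSmem s).1 hs).2.2.2
  haveI : Nonempty M := ⟨x₀⟩
  choose! ψof hψev hψlad using hchoice
  set E : Set (V n) := ⋃₀ S with hEdef
  have hmemE : ∀ u : V n, u ∈ E ↔ ∃ s ∈ S, u ∈ s := fun u => mem_sUnion
  choose! sof hsofS hsofmem using fun u (hu : u ∈ E) => (hmemE u).1 hu
  set φbar : V n → M := fun u => if hu : u ∈ E then ψof (sof u) u else φ u with hφbardef
  have hsubE : ∀ s ∈ S, s ⊆ E := fun s hs => subset_sUnion_of_mem hs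
  -- coherence of the glued map
  have hcoh : ∀ s ∈ S, ∀ u ∈ s, φbar u = ψof s u := by
    intro s hs u hu
    have huE : u ∈ E := (hmemE u).2 ⟨s, hs, hu⟩
    have h1 : φbar u = ψof (sof u) u := by rw [hφbardef]; exact dif_pos huE
    rw [h1]
    exact hglue (sof u) s (hsofS u huE) hs _ _ (hψev _ (hsofS u huE)) (hψlad _ (hsofS u huE))
      (hψev s hs) (hψlad s hs) ⟨hsofmem u huE, hu⟩
  have hφbarev : ∀ᶠ u in 𝓝 (0 : V n), φbar u = φ u := by
    have h1 : ∀ᶠ u in 𝓝 (0 : V n), u ∈ B := Metric.ball_mem_nhds 0 hε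
    filter_upwards [h1, hψev B hBmem] with u hu h2
    rw [hcoh B hBmem u hu, h2]
  have hEopen : IsOpen E := isOpen_sUnion (fun s hs => ((hSmem s).1 hs).2.1)
  have hφbarlad : LocalAnaDiffeoOn (V n) (V n) φbar E := by
    intro u hu
    obtain ⟨s, hs, hus⟩ := (hmemE u).1 hu
    obtain ⟨U, hUo, hxU, hUsub, hinjU, himgU, hanaU, g, hgleft, hganal⟩ := hψlad s hs u hus
    have heqU : EqOn φbar (ψof s) U := fun v hv => hcoh s hs v (hUsub hv)
    have himeq : φbar '' U = ψof s '' U := image_congr heqU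
    refine ⟨U, hUo, hxU, hUsub.trans (hsubE s hs), hinjU.congr heqU.symm,
      by rw [himeq]; exact himgU, ?_, g,
      fun v hv => by rw [heqU hv]; exact hgleft hv, by rw [himeq]; exact hganal⟩
    intro v hv
    apply canalyticAt_congr (hanaU v hv)
    have hsev : ∀ᶠ w in 𝓝 v, w ∈ s := ((hSmem s).1 hs).2.1.mem_nhds (hUsub hv)
    filter_upwards [hsev] with w hw
    exact hcoh s hs w hw
  have hEstar : StarShapedZero E := by
    intro u hu t ht
    obtain ⟨s, hs, hus⟩ := hu
    exact ⟨s, hs, ((hSmem s).1 hs).1 u hus t ht⟩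
  have h0E : (0 : V n) ∈ E := hsubE B hBmem (Metric.mem_ball_self hε)
  -- invariance of the family under r
  have hinv : ∀ (γ : Γ) (s : Set (V n)), s ∈ S → (r γ '' s ∈ S ∧
      ((⇑(ρ γ) ∘ ψof s ∘ r γ⁻¹) =ᶠ[𝓝 (0 : V n)] φ) ∧
      LocalAnaDiffeoOn (V n) (V n) (⇑(ρ γ) ∘ ψof s ∘ r γ⁻¹) (r γ '' s)) := by
    intro γ s hs
    obtain ⟨hstar, hopen, h0s, -⟩ := (hSmem s).1 hs
    set ψ := ψof s with hψdef
    set ψ' : V n → M := ⇑(ρ γ) ∘ ψ ∘ r γ⁻¹ with hψ'def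
    have himg_pre : ∀ t : Set (V n), r γ '' t = r γ⁻¹ ⁻¹' t := by
      intro t
      exact congrFun (Set.image_eq_preimage_of_inverse (fun u => hrinv₂ γ u) (fun u => hrinv₁ γ u)) t
    have hopen' : IsOpen (r γ '' s) := by rw [himg_pre]; exact hopen.preimage (hrcont γ⁻¹)
    have hstar' : StarShapedZero (r γ '' s) := by
      rintro _ ⟨u, hu, rfl⟩ t ht
      exact ⟨t • u, hstar u hu t ht, (hrsmul γ t u).symm ▸ rfl⟩
    have h0' : (0 : V n) ∈ r γ '' s := ⟨0, h0s, hrzero γ⟩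
    have hψ'app : ∀ a : V n, ψ' (r γ a) = ρ γ (ψ a) := by
      intro a
      simp only [hψ'def, Function.comp_apply, hrinv₂ γ a]
    have hev' : ψ' =ᶠ[𝓝 (0 : V n)] φ := by
      have htend : Tendsto (r γ⁻¹) (𝓝 (0 : V n)) (𝓝 (0 : V n)) := by
        have h1 := (hrcont γ⁻¹).tendsto 0
        rwa [hrzero γ⁻¹] at h1
      have e1 : ∀ᶠ u in 𝓝 (0 : V n), ψ (r γ⁻¹ u) = φ (r γ⁻¹ u) := htend.eventually (hψev s hs)
      have e2 : ∀ᶠ u in 𝓝 (0 : V n), φ (r γ (r γ⁻¹ u)) = ρ γ (φ (r γ⁻¹ u)) :=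
        htend.eventually (hconj γ)
      filter_upwards [e1, e2] with u h1 h2
      calc ψ' u = ρ γ (ψ (r γ⁻¹ u)) := rfl
      _ = ρ γ (φ (r γ⁻¹ u)) := by rw [h1]
      _ = φ (r γ (r γ⁻¹ u)) := h2.symm
      _ = φ u := by rw [hrinv₁ γ u]
    have hlad' : LocalAnaDiffeoOn (V n) (V n) ψ' (r γ '' s) := by
      rintro _ ⟨u, hu, rfl⟩
      obtain ⟨U, hUo, hxU, hUsub, hinjU, himgU, hanaU, g, hgleft, hganal⟩ := hψlad s hs u hu
      have himg2 : ψ' '' (r γ '' U) = ⇑(ρ γ) '' (ψ '' U) := by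
        rw [← image_comp, ← image_comp]
        apply image_congr
        intro a _
        exact hψ'app a
      have hρsymm : ⇑(ρ γ).symm = ⇑(ρ γ⁻¹) := by
        funext m
        rw [_root_.map_inv]
        rfl
      refine ⟨r γ '' U, by rw [himg_pre]; exact hUo.preimage (hrcont γ⁻¹), ⟨u, hxU, rfl⟩,
        image_mono hUsub, ?_, ?_, ?_, (r γ) ∘ g ∘ ⇑(ρ γ⁻¹), ?_, ?_⟩
      · rintro _ ⟨a, ha, rfl⟩ _ ⟨b, hb, rfl⟩ hab
        rw [hψ'app a, hψ'app b] at hab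
        rw [hinjU ha hb ((ρ γ).injective hab)]
      · rw [himg2, Equiv.image_eq_preimage_symm]
        apply himgU.preimage
        rw [hρsymm]
        exact hρcont γ⁻¹
      · rintro _ ⟨a, ha, rfl⟩
        have h1 : CAnalyticAt (V n) (V n) (r γ⁻¹ : V n → V n) (r γ a) :=
          canalyticAt_self_iff.2 (hranalytic γ⁻¹ _)
        have h2 : CAnalyticAt (V n) (V n) ψ (r γ⁻¹ (r γ a)) := by
          rw [hrinv₂ γ a]; exact hanaU a ha
        have h3 : CAnalyticAt (V n) (V n) (⇑(ρ γ)) (ψ (r γ⁻¹ (r γ a))) := hρ γ _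
        exact canalyticAt_comp h3 (canalyticAt_comp h2 h1)
      · rintro _ ⟨a, ha, rfl⟩
        show r γ (g (ρ γ⁻¹ (ψ' (r γ a)))) = r γ a
        rw [hψ'app a, hρinv γ (ψ a), hgleft ha]
      · rw [himg2]
        rintro _ ⟨y, hy, rfl⟩
        have h1 : CAnalyticAt (V n) (V n) (⇑(ρ γ⁻¹)) (ρ γ y) := hρ γ⁻¹ _
        have h2 : CAnalyticAt (V n) (V n) g (ρ γ⁻¹ (ρ γ y)) := by
          rw [hρinv γ y]; exact hganal y hy
        have h3 : CAnalyticAt (V n) (V n) (r γ : V n → V n) (g (ρ γ⁻¹ (ρ γ y))) :=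
          canalyticAt_self_iff.2 (hranalytic γ _)
        exact canalyticAt_comp h3 (canalyticAt_comp h2 h1)
    exact ⟨(hSmem _).2 ⟨hstar', hopen', h0', ψ', hev', hlad'⟩, hev', hlad'⟩
  have hEinv : ∀ γ : Γ, ∀ u ∈ E, r γ u ∈ E := by
    intro γ u hu
    obtain ⟨s, hs, hus⟩ := (hmemE u).1 hu
    exact hsubE _ (hinv γ s hs).1 ⟨u, hus, rfl⟩
  have hsemi : ∀ γ : Γ, ∀ u ∈ E, φbar (r γ u) = ρ γ (φbar u) := by
    intro γ u hu
    obtain ⟨s, hs, hus⟩ := (hmemE u).1 hu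
    obtain ⟨hs', hev', hlad'⟩ := hinv γ s hs
    have h1 : φbar (r γ u) = ψof (r γ '' s) (r γ u) := hcoh _ hs' _ ⟨u, hus, rfl⟩
    have h2 : EqOn (ψof (r γ '' s)) (⇑(ρ γ) ∘ ψof s ∘ r γ⁻¹) (r γ '' s ∩ r γ '' s) :=
      hglue _ _ hs' hs' _ _ (hψev _ hs') (hψlad _ hs') hev' hlad'
    have h3 := h2 ⟨⟨u, hus, rfl⟩, ⟨u, hus, rfl⟩⟩
    rw [h1, h3]
    show ρ γ (ψof s (r γ⁻¹ (r γ u))) = ρ γ (φbar u)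
    rw [hrinv₂ γ u, hcoh s hs u hus]
  refine ⟨E, ⟨hEstar, hEopen, h0E, φbar, hφbarev, hφbarlad⟩, ?_, hEinv,
    φbar, hφbarev, hφbarlad, hsemi⟩
  intro E' h1 h2 h3 h4
  exact hsubE E' ((hSmem E').2 ⟨h1, h2, h3, h4⟩)
end Zeghib
end
end

section
/- Let n ≥ 3 and let Γ be a finite-index subgroup of SL(n,ℤ), acting linearly on ℝⁿ. For every v ∈ ℝⁿ∖{0}, the orbit Γ·v is either dense in ℝⁿ or discrete; and it is discrete exactly when v = λu for some λ ∈ ℝ and some rational vector u ∈ ℚⁿ∖{0}. -/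
open Set Filter Topology MeasureTheory Matrix Function
noncomputable section
namespace Zeghib

abbrev SLR (n : ℕ) := Matrix.SpecialLinearGroup (Fin n) ℝ
abbrev SLZ (n : ℕ) := Matrix.SpecialLinearGroup (Fin n) ℤ

/-- The topology on `SL(n,ℝ)` induced from the space of matrices. -/
instance {n : ℕ} : TopologicalSpace (SLR n) :=
  TopologicalSpace.induced (fun g => (g : Matrix (Fin n) (Fin n) ℝ)) inferInstance

/-- The linear action of `SL(n,ℝ)` on `ℝⁿ`. -/
def lact {n : ℕ} (γ : SLR n) (u : V n) : V n := (γ : Matrix (Fin n) (Fin n) ℝ).mulVec u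

lemma lact_mul {n : ℕ} (A B : SLR n) (v : V n) : lact (A * B) v = lact A (lact B v) := by
  simp only [lact, Matrix.SpecialLinearGroup.coe_mul]
  rw [Matrix.mulVec_mulVec]

lemma lact_one {n : ℕ} (v : V n) : lact (1 : SLR n) v = v := by
  simp [lact]

/-- The coefficient-wise embedding `SL(n,ℤ) →* SL(n,ℝ)`. -/
def slCast {n : ℕ} : SLZ n →* SLR n := Matrix.SpecialLinearGroup.map (Int.castRingHom ℝ)

/-- `SL(n,ℤ)` viewed as a subgroup of `SL(n,ℝ)`. -/
def SLZR (n : ℕ) : Subgroup (SLR n) := MonoidHom.range (slCast (n := n))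

/-- A subgroup `Δ` of a topological group `G` is a lattice if it is discrete and the
quotient `G ⧸ Δ` carries a nonzero finite `G`-invariant (Borel) measure. -/
def IsLatticeIn (G : Type*) [Group G] [TopologicalSpace G] (Δ : Subgroup G) : Prop :=
  DiscreteTopology Δ ∧
    letI : MeasurableSpace (G ⧸ Δ) := borel _
    ∃ μ : Measure (G ⧸ Δ), μ ≠ 0 ∧ IsFiniteMeasure μ ∧
      ∀ g : G, Measure.map (fun x => g • x) μ = μ

/-- `Γ ≤ SL(n,ℝ)` is, up to an automorphism of (the topological group) `SL(n,ℝ)`,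
a finite-index subgroup of `SL(n,ℤ)`. -/
def UpToAutoFiniteIndexSLZ {n : ℕ} (Γ : Subgroup (SLR n)) : Prop :=
  ∃ σ : SLR n ≃* SLR n, Continuous σ ∧ Continuous σ.symm ∧
    Γ.map σ.toMonoidHom ≤ SLZR n ∧ ((Γ.map σ.toMonoidHom).subgroupOf (SLZR n)).FiniteIndex

/-- A subset of a topological space is discrete if each of its points is isolated in it. -/
def IsDiscreteSet {X : Type*} [TopologicalSpace X] (S : Set X) : Prop :=
  ∀ w ∈ S, ∃ U ∈ 𝓝 w, U ∩ S ⊆ {w}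

section Aux
variable {n : ℕ}

/-- The orbit set. -/
def orb (Γ : Subgroup (SLZ n)) (v : V n) : Set (V n) :=
  {w : V n | ∃ γ ∈ Γ, lact (slCast γ) v = w}

lemma orb_mul {Γ : Subgroup (SLZ n)} {v w : V n} (hw : w ∈ orb Γ v) {γ : SLZ n} (hγ : γ ∈ Γ) :
    lact (slCast γ) w ∈ orb Γ v := by
  obtain ⟨δ, hδ, rfl⟩ := hw
  exact ⟨γ * δ, Γ.mul_mem hγ hδ, by rw [_root_.map_mul, lact_mul]⟩

lemma self_mem_orb (Γ : Subgroup (SLZ n)) (v : V n) : v ∈ orb Γ v :=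
  ⟨1, Γ.one_mem, by rw [_root_.map_one, lact_one]⟩

/-- Integer transvection as an element of `SL(n,ℤ)`. -/
def Tz (i j : Fin n) (hij : i ≠ j) (c : ℤ) : SLZ n :=
  ⟨Matrix.transvection i j c, Matrix.det_transvection_of_ne i j hij c⟩

lemma Tz_mul (i j : Fin n) (hij : i ≠ j) (c d : ℤ) :
    Tz i j hij c * Tz i j hij d = Tz i j hij (c + d) :=
  Subtype.ext (Matrix.transvection_mul_transvection_same i j hij c d)

lemma Tz_zero (i j : Fin n) (hij : i ≠ j) : Tz i j hij 0 = 1 :=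
  Subtype.ext (Matrix.transvection_zero i j)

lemma Tz_inv (i j : Fin n) (hij : i ≠ j) (c : ℤ) : (Tz i j hij c)⁻¹ = Tz i j hij (-c) := by
  apply inv_eq_of_mul_eq_one_right
  rw [Tz_mul, add_neg_cancel, Tz_zero]

lemma Tz_zpow (i j : Fin n) (hij : i ≠ j) (c : ℤ) (p : ℤ) :
    Tz i j hij c ^ p = Tz i j hij (p * c) := by
  induction p using Int.induction_on with
  | zero => rw [zpow_zero, zero_mul, Tz_zero]
  | succ p ih => rw [_root_.zpow_add_one, ih, Tz_mul]; ring_nf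
  | pred p ih => rw [_root_.zpow_sub_one, ih, Tz_inv, Tz_mul]; ring_nf

lemma coe_slCast_Tz (i j : Fin n) (hij : i ≠ j) (c : ℤ) :
    (slCast (Tz i j hij c) : Matrix (Fin n) (Fin n) ℝ) = Matrix.transvection i j (c : ℝ) := by
  ext a b
  rw [slCast, Matrix.SpecialLinearGroup.map_apply_coe, RingHom.mapMatrix_apply, Matrix.map_apply]
  simp only [slCast, Matrix.SpecialLinearGroup.map_apply_coe, RingHom.mapMatrix_apply,
    Matrix.map_apply, Tz, Matrix.transvection, Matrix.add_apply, Matrix.one_apply,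
    Matrix.single, Matrix.of_apply]
  split_ifs <;> simp

lemma lact_Tz (i j : Fin n) (hij : i ≠ j) (c : ℤ) (u : V n) (l : Fin n) :
    lact (slCast (Tz i j hij c)) u l = if l = i then u l + (c : ℝ) * u j else u l := by
  rw [lact, coe_slCast_Tz]
  have hstd : (Matrix.single i j (c : ℝ) *ᵥ u) l = if l = i then (c : ℝ) * u j else 0 := by
    simp only [Matrix.mulVec, dotProduct, Matrix.single, Matrix.of_apply,
      ite_and, ite_mul, zero_mul]
    by_cases h : l = i
    · subst h
      simp [Finset.sum_ite_eq]
    · simp [Ne.symm h, h]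
  simp only [Matrix.transvection, Matrix.add_mulVec, Matrix.one_mulVec, Pi.add_apply, hstd]
  split_ifs <;> simp

lemma exists_Tz_mem (Γ : Subgroup (SLZ n)) (hΓ : Γ.FiniteIndex) (i j : Fin n) (hij : i ≠ j) :
    ∃ m : ℤ, m ≠ 0 ∧ Tz i j hij m ∈ Γ := by
  haveI := hΓ
  haveI : Finite (SLZ n ⧸ Γ) := Subgroup.finite_quotient_of_finiteIndex
  obtain ⟨p, q, hpq, he⟩ :=
    Finite.exists_ne_map_eq_of_infinite (fun p : ℤ => ((Tz i j hij p : SLZ n) : SLZ n ⧸ Γ))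
  refine ⟨-p + q, fun h => hpq (by omega), ?_⟩
  have h2 := QuotientGroup.eq.mp he
  rwa [Tz_inv, Tz_mul] at h2



lemma dense_zsmul {a b : ℝ} (hb : b ≠ 0) (hir : ∀ q : ℚ, a ≠ q * b) :
    Dense {x : ℝ | ∃ p q : ℤ, p • a + q • b = x} := by
  have hset : {x : ℝ | ∃ p q : ℤ, p • a + q • b = x} = (AddSubgroup.closure {a, b} : Set ℝ) := by
    ext x
    simp [AddSubgroup.mem_closure_pair]
  rw [hset]
  rcases AddSubgroup.dense_or_cyclic (AddSubgroup.closure {a, b}) with h | ⟨c, hc⟩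
  · exact h
  · exfalso
    have ha : a ∈ AddSubgroup.closure ({a, b} : Set ℝ) := AddSubgroup.subset_closure (by simp)
    have hbm : b ∈ AddSubgroup.closure ({a, b} : Set ℝ) := AddSubgroup.subset_closure (by simp)
    rw [hc, AddSubgroup.mem_closure_singleton] at ha hbm
    obtain ⟨pa, hpa⟩ := ha
    obtain ⟨pb, hpb⟩ := hbm
    have hpb0 : pb ≠ 0 := by
      rintro rfl
      simp at hpb
      exact hb hpb.symm
    have hpbR : ((pb : ℚ) : ℝ) ≠ 0 := by
      rw [Rat.cast_intCast, Int.cast_ne_zero]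
      exact hpb0
    apply hir ((pa : ℚ) / (pb : ℚ))
    rw [← hpa, ← hpb]
    simp only [zsmul_eq_mul]
    rw [Rat.cast_div]
    field_simp
    push_cast
    ring

lemma dense_avoid {a b : ℝ} (hb : b ≠ 0) (hir : ∀ q : ℚ, a ≠ q * b) (w t : ℝ) {ε : ℝ}
    (hε : 0 < ε) :
    ∃ p q : ℤ, |w + ((p : ℝ) * a + (q : ℝ) * b) - t| < ε ∧
      ∀ r : ℚ, w + ((p : ℝ) * a + (q : ℝ) * b) ≠ (r : ℝ) * b := by
  have ha : a ≠ 0 := by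
    intro h
    exact hir 0 (by simp [h])
  set S : Set ℝ := {x : ℝ | ∃ p q : ℤ, w + ((p : ℝ) * a + (q : ℝ) * b) = x} with hSdef
  have hS : Dense S := by
    have himg : S = (fun y => y - w) ⁻¹' {x : ℝ | ∃ p q : ℤ, p • a + q • b = x} := by
      ext x
      constructor
      · rintro ⟨p, q, rfl⟩
        exact ⟨p, q, by push_cast [zsmul_eq_mul]; ring⟩
      · rintro ⟨p, q, hpq⟩
        refine ⟨p, q, ?_⟩
        simp only [zsmul_eq_mul] at hpq
        push_cast at hpq ⊢
        linarith
    rw [himg]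
    exact (dense_zsmul hb hir).preimage (Homeomorph.subRight w).isOpenMap
  have key : ∃ x ∈ S, dist t x < ε ∧ ∀ r : ℚ, x ≠ (r : ℝ) * b := by
    by_cases hbad : ∃ x0 ∈ S, ∃ r : ℚ, x0 = (r : ℝ) * b
    · obtain ⟨x0, hx0S, r0, hx0⟩ := hbad
      set C : Set ℝ := Set.range (fun z : ℤ => x0 + (z : ℝ) * b) with hCdef
      have hCc : IsClosed C := by
        have : C = (fun x => (x - x0) / b) ⁻¹' (Set.range ((↑) : ℤ → ℝ)) := by
          ext x
          simp only [hCdef, Set.mem_range, Set.mem_preimage]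
          constructor
          · rintro ⟨z, rfl⟩
            exact ⟨z, by field_simp; ring⟩
          · rintro ⟨z, hz⟩
            refine ⟨z, ?_⟩
            field_simp at hz
            linarith
        rw [this]
        exact Int.isClosedEmbedding_coe_real.isClosed_range.preimage (by fun_prop)
      have hCd : Dense Cᶜ := (Set.countable_range _).dense_compl ℝ
      have hgood : Dense (S ∩ Cᶜ) := hS.inter_of_isOpen_right hCd hCc.isOpen_compl
      obtain ⟨x, ⟨hxS, hxC⟩, hdist⟩ := hgood.exists_dist_lt t hε
      refine ⟨x, hxS, hdist, ?_⟩
      intro r hr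
      apply hxC
      -- show x ∈ C : the `p`-components of x and x0 agree
      obtain ⟨p, q, hx⟩ := hxS
      obtain ⟨p0, q0, hx0'⟩ := hx0S
      have hpp0 : p = p0 := by
        by_contra hne
        have hd : ((p : ℝ) - p0) * a = ((r - r0 : ℚ) : ℝ) * b - ((q : ℝ) - q0) * b := by
          have e1 : x - x0 = ((p : ℝ) - p0) * a + ((q : ℝ) - q0) * b := by
            rw [← hx, ← hx0']; ring
          have e2 : x - x0 = ((r - r0 : ℚ) : ℝ) * b := by
            rw [hr, hx0]; push_cast; ring
          linarith [e1, e2]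
        have hppR : ((p : ℝ) - p0) ≠ 0 := by
          rw [sub_ne_zero]
          exact_mod_cast hne
        apply hir ((r - r0 - ((q : ℚ) - (q0 : ℚ))) / ((p : ℚ) - p0))
        push_cast
        push_cast at hd
        rw [div_mul_eq_mul_div, eq_comm, div_eq_iff hppR]
        linear_combination -hd
      rw [hpp0] at hx
      refine ⟨q - q0, ?_⟩
      push_cast
      linear_combination hx - hx0'
    · push_neg at hbad
      obtain ⟨x, hxS, hdist⟩ := hS.exists_dist_lt t hε
      exact ⟨x, hxS, hdist, hbad x hxS⟩
  obtain ⟨x, ⟨p, q, rfl⟩, hdist, havoid⟩ := key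
  exact ⟨p, q, by rwa [abs_sub_comm, ← Real.dist_eq], havoid⟩

lemma irr_symm {x y : ℝ} (hy : y ≠ 0) (h : ∀ q : ℚ, x ≠ (q : ℝ) * y) :
    x ≠ 0 ∧ ∀ q : ℚ, y ≠ (q : ℝ) * x := by
  have hx : x ≠ 0 := fun h0 => h 0 (by simp [h0])
  refine ⟨hx, fun q hq => ?_⟩
  have hq0 : (q : ℚ) ≠ 0 := by
    rintro rfl
    rw [Rat.cast_zero, zero_mul] at hq
    exact hy hq
  apply h q⁻¹
  rw [hq]
  rw [Rat.cast_inv]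
  field_simp

lemma orb_step (Γ : Subgroup (SLZ n)) (hΓ : Γ.FiniteIndex) {v w : V n} (hw : w ∈ orb Γ v)
    {i j k : Fin n} (hij : i ≠ j) (hik : i ≠ k) (hjk : j ≠ k) (hk : w k ≠ 0)
    (hirr : ∀ q : ℚ, w j ≠ (q : ℝ) * w k) (t : ℝ) {ε : ℝ} (hε : 0 < ε) :
    ∃ w' ∈ orb Γ v, |w' i - t| < ε ∧ (∀ r : ℚ, w' i ≠ (r : ℝ) * w k) ∧
      ∀ l, l ≠ i → w' l = w l := by
  obtain ⟨m1, hm1, hm1m⟩ := exists_Tz_mem Γ hΓ i j hij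
  obtain ⟨m2, hm2, hm2m⟩ := exists_Tz_mem Γ hΓ i k hik
  have hm1R : (m1 : ℝ) ≠ 0 := Int.cast_ne_zero.mpr hm1
  have hm2R : (m2 : ℝ) ≠ 0 := Int.cast_ne_zero.mpr hm2
  set a : ℝ := (m1 : ℝ) * w j with ha
  set b : ℝ := (m2 : ℝ) * w k with hb
  have hb0 : b ≠ 0 := mul_ne_zero hm2R hk
  have hir : ∀ q : ℚ, a ≠ (q : ℝ) * b := by
    intro q hq
    apply hirr (q * (m2 : ℚ) / (m1 : ℚ))
    rw [ha, hb] at hq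
    push_cast
    rw [div_mul_eq_mul_div, eq_comm, div_eq_iff hm1R, eq_comm] at *
    linear_combination hq
  obtain ⟨p, q, hclose, havoid⟩ := dense_avoid hb0 hir (w i) t hε
  set γ : SLZ n := Tz i j hij (p * m1) * Tz i k hik (q * m2) with hγ
  have hγm : γ ∈ Γ := by
    apply Γ.mul_mem
    · rw [← Tz_zpow]
      exact Γ.zpow_mem hm1m p
    · rw [← Tz_zpow]
      exact Γ.zpow_mem hm2m q
  refine ⟨lact (slCast γ) w, orb_mul hw hγm, ?_, ?_, ?_⟩
  · have hcoord : lact (slCast γ) w i = w i + ((p : ℝ) * a + (q : ℝ) * b) := by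
      rw [hγ, _root_.map_mul, lact_mul, lact_Tz]
      rw [if_pos rfl, lact_Tz, lact_Tz, if_pos rfl, if_neg (Ne.symm hij)]
      push_cast
      ring
    rw [hcoord]
    exact hclose
  · intro r hr
    have hcoord : lact (slCast γ) w i = w i + ((p : ℝ) * a + (q : ℝ) * b) := by
      rw [hγ, _root_.map_mul, lact_mul, lact_Tz]
      rw [if_pos rfl, lact_Tz, lact_Tz, if_pos rfl, if_neg (Ne.symm hij)]
      push_cast
      ring
    rw [hcoord] at hr
    apply havoid (r / (m2 : ℚ))
    rw [hr, hb]
    push_cast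
    field_simp
  · intro l hl
    rw [hγ, _root_.map_mul, lact_mul, lact_Tz, if_neg hl, lact_Tz, if_neg hl]

lemma orb_stage (Γ : Subgroup (SLZ n)) (hΓ : Γ.FiniteIndex) {v : V n} {j k : Fin n}
    (hjk : j ≠ k) (hk : v k ≠ 0) (hirr : ∀ q : ℚ, v j ≠ (q : ℝ) * v k) (t : V n) {ε : ℝ}
    (hε : 0 < ε) (s : Finset (Fin n)) (hjs : j ∉ s) (hks : k ∉ s) :
    ∃ w ∈ orb Γ v, (∀ l ∈ s, |w l - t l| < ε) ∧ ∀ l ∉ s, w l = v l := by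
  induction s using Finset.induction_on with
  | empty => exact ⟨v, self_mem_orb Γ v, by simp, fun _ _ => rfl⟩
  | @insert i s his ih =>
    have hij : i ≠ j := fun h => hjs (h ▸ Finset.mem_insert_self i s)
    have hik : i ≠ k := fun h => hks (h ▸ Finset.mem_insert_self i s)
    obtain ⟨w, hw, h1, h2⟩ := ih (fun h => hjs (Finset.mem_insert_of_mem h))
      (fun h => hks (Finset.mem_insert_of_mem h))
    have hwj : w j = v j := h2 j (fun h => hjs (Finset.mem_insert_of_mem h))
    have hwk : w k = v k := h2 k (fun h => hks (Finset.mem_insert_of_mem h))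
    obtain ⟨w', hw', hclose, _, hfix⟩ := orb_step Γ hΓ hw hij hik hjk
      (by rw [hwk]; exact hk) (by rw [hwj, hwk]; exact hirr) (t i) hε
    refine ⟨w', hw', ?_, ?_⟩
    · intro l hl
      rcases Finset.mem_insert.mp hl with rfl | hl
      · exact hclose
      · rw [hfix l (fun h => his (h ▸ hl))]
        exact h1 l hl
    · intro l hl
      rw [hfix l (fun h => hl (h ▸ Finset.mem_insert_self i s))]
      exact h2 l (fun h => hl (Finset.mem_insert_of_mem h))

lemma orb_dense (hn : 3 ≤ n) (Γ : Subgroup (SLZ n)) (hΓ : Γ.FiniteIndex) {v : V n}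
    {j k : Fin n} (hjk : j ≠ k) (hk : v k ≠ 0) (hirr : ∀ q : ℚ, v j ≠ (q : ℝ) * v k) :
    Dense (orb Γ v) := by
  rw [Metric.dense_iff]
  intro t ε hε
  obtain ⟨i0, hi0j, hi0k⟩ : ∃ i0 : Fin n, i0 ≠ j ∧ i0 ≠ k := by
    by_contra hcon
    push_neg at hcon
    have hsub : (Finset.univ : Finset (Fin n)) ⊆ {j, k} := by
      intro l _
      by_cases h : l = j
      · simp [h]
      · simp [hcon l h]
    have h1 : n ≤ ({j, k} : Finset (Fin n)).card := by
      calc n = (Finset.univ : Finset (Fin n)).card := by simp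
        _ ≤ _ := Finset.card_le_card hsub
    have h2 : ({j, k} : Finset (Fin n)).card ≤ 2 :=
      (Finset.card_insert_le _ _).trans (by simp)
    omega
  set s : Finset (Fin n) := Finset.univ \ {i0, j, k} with hs
  have hjs : j ∉ s := by simp [hs]
  have hks : k ∉ s := by simp [hs]
  have hi0s : i0 ∉ s := by simp [hs]
  obtain ⟨w1, hw1, hg1, hf1⟩ := orb_stage Γ hΓ hjk hk hirr t hε s hjs hks
  have hw1j : w1 j = v j := hf1 j hjs
  have hw1k : w1 k = v k := hf1 k hks
  -- stage i0
  obtain ⟨w2, hw2, hg2, hav2, hf2⟩ := orb_step Γ hΓ hw1 hi0j hi0k hjk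
    (by rw [hw1k]; exact hk) (by rw [hw1j, hw1k]; exact hirr) (t i0) hε
  rw [hw1k] at hav2
  obtain ⟨hw2i0, hav2'⟩ := irr_symm hk hav2
  have hw2j : w2 j = v j := by rw [hf2 j (Ne.symm hi0j), hw1j]
  have hw2k : w2 k = v k := by rw [hf2 k (Ne.symm hi0k), hw1k]
  -- stage j : adjust coordinate j using (k, i0)
  obtain ⟨w3, hw3, hg3, hav3, hf3⟩ := orb_step Γ hΓ hw2 hjk (fun h => hi0j h.symm)
    (fun h => hi0k h.symm) hw2i0 (by rw [hw2k]; exact hav2') (t j) hε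
  have hw3i0 : w3 i0 = w2 i0 := hf3 i0 hi0j
  have hw3k : w3 k = v k := by rw [hf3 k (Ne.symm hjk), hw2k]
  -- stage k : adjust coordinate k using (j, i0)
  obtain ⟨w4, hw4, hg4, _, hf4⟩ := orb_step Γ hΓ hw3 (Ne.symm hjk) (fun h => hi0k h.symm)
    (fun h => hi0j h.symm) (by rw [hw3i0]; exact hw2i0) (by rw [hw3i0]; exact hav3) (t k) hε
  refine ⟨w4, Metric.mem_ball.mpr ((dist_pi_lt_iff hε).mpr fun l => ?_), hw4⟩
  rw [Real.dist_eq]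
  by_cases hlk : l = k
  · subst hlk; exact hg4
  by_cases hlj : l = j
  · subst hlj
    rw [hf4 _ hlk]
    exact hg3
  by_cases hli0 : l = i0
  · subst hli0
    rw [hf4 _ hlk, hf3 _ hlj]
    exact hg2
  · have hls : l ∈ s := by simp [hs, hli0, hlj, hlk]
    rw [hf4 _ hlk, hf3 _ hlj, hf2 _ hli0]
    exact hg1 l hls


lemma rat_mul_int_den_dvd {q : ℚ} {d : ℕ} (h : q.den ∣ d) : ∃ z : ℤ, (q * d : ℚ) = z := by
  obtain ⟨c, hc⟩ := h
  refine ⟨q.num * c, ?_⟩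
  have hden : (q.den : ℚ) ≠ 0 := by exact_mod_cast q.den_nz
  have key : q * (q.den : ℚ) = (q.num : ℚ) := by
    nth_rewrite 1 [show q = (q.num : ℚ) / q.den from (Rat.num_div_den q).symm]
    rw [div_mul_cancel₀ _ hden]
  rw [hc]
  push_cast
  rw [← mul_assoc, key]

lemma orb_subset_lattice (Γ : Subgroup (SLZ n)) {v : V n} (lam : ℝ) (u : Fin n → ℚ)
    (hvu : v = lam • fun i => ((u i : ℝ))) {w : V n} (hw : w ∈ orb Γ v) (i : Fin n) :
    ∃ z : ℤ, w i = (lam / ((∏ l, (u l).den : ℕ) : ℝ)) * z := by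
  set N : ℕ := ∏ l, (u l).den with hN
  have hN0 : (N : ℚ) ≠ 0 := by
    rw [hN]
    push_cast
    exact Finset.prod_ne_zero_iff.mpr fun l _ => Nat.cast_ne_zero.mpr (u l).den_nz
  have hN0R : (N : ℝ) ≠ 0 := by exact_mod_cast hN0
  obtain ⟨γ, hγ, rfl⟩ := hw
  have hterm : ∀ l : Fin n, ∃ z : ℤ, ((u l) * N : ℚ) = z := fun l =>
    rat_mul_int_den_dvd (Finset.dvd_prod_of_mem _ (Finset.mem_univ l))
  choose z hz using hterm
  set r : ℚ := ∑ l, ((γ : Matrix (Fin n) (Fin n) ℤ) i l : ℚ) * u l with hr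
  have claim1 : lact (slCast γ) v i = lam * (r : ℝ) := by
    rw [lact, hvu, hr]
    simp only [Matrix.mulVec, dotProduct]
    push_cast
    rw [Finset.mul_sum]
    apply Finset.sum_congr rfl
    intro l _
    have hc : (slCast γ : Matrix (Fin n) (Fin n) ℝ) i l
        = ((γ : Matrix (Fin n) (Fin n) ℤ) i l : ℝ) := by
      simp [slCast]
    rw [hc]
    simp only [Pi.smul_apply, smul_eq_mul]
    ring
  have claim2 : (r * N : ℚ)
      = ((∑ l, (γ : Matrix (Fin n) (Fin n) ℤ) i l * z l : ℤ) : ℚ) := by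
    rw [hr, Finset.sum_mul]
    push_cast
    apply Finset.sum_congr rfl
    intro l _
    rw [mul_assoc, hz l]
  refine ⟨∑ l, (γ : Matrix (Fin n) (Fin n) ℤ) i l * z l, ?_⟩
  have hrr : (r : ℝ) = ((∑ l, (γ : Matrix (Fin n) (Fin n) ℤ) i l * z l : ℤ) : ℝ) / N := by
    rw [eq_div_iff hN0R]
    exact_mod_cast claim2
  rw [claim1, hrr]
  field_simp

lemma orb_discrete (Γ : Subgroup (SLZ n)) {v : V n} (hv : v ≠ 0) (lam : ℝ) (u : Fin n → ℚ)
    (hvu : v = lam • fun i => ((u i : ℝ))) : IsDiscreteSet (orb Γ v) := by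
  have hlam : lam ≠ 0 := by
    rintro rfl
    exact hv (by simp [hvu])
  set N : ℕ := ∏ l, (u l).den with hN
  have hN0 : (0 : ℝ) < N := by
    have : N ≠ 0 := Finset.prod_ne_zero_iff.mpr fun l _ => (u l).den_nz
    exact_mod_cast Nat.pos_of_ne_zero this
  set r0 : ℝ := |lam| / N with hr0def
  have hr0 : 0 < r0 := div_pos (abs_pos.mpr hlam) hN0
  intro w hw
  refine ⟨Metric.ball w r0, Metric.ball_mem_nhds w hr0, ?_⟩
  rintro x ⟨hxball, hxorb⟩
  have hxw : x = w := by
    funext i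
    obtain ⟨z1, hz1⟩ := orb_subset_lattice Γ lam u hvu hxorb i
    obtain ⟨z2, hz2⟩ := orb_subset_lattice Γ lam u hvu hw i
    have hd : dist (x i) (w i) < r0 :=
      lt_of_le_of_lt (dist_le_pi_dist x w i) (Metric.mem_ball.mp hxball)
    rw [Real.dist_eq, hz1, hz2] at hd
    have habs : |lam / (N : ℝ)| = |lam| / N := by
      rw [abs_div, abs_of_pos hN0]
    have hz12 : z1 = z2 := by
      by_contra hne
      have h1 : (1 : ℝ) ≤ |(z1 : ℝ) - z2| := by
        rw [← Int.cast_sub, ← Int.cast_abs]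
        exact_mod_cast Int.one_le_abs (sub_ne_zero.mpr hne)
      have h2 : |lam / (N : ℝ) * z1 - lam / N * z2| = |lam| / N * |(z1 : ℝ) - z2| := by
        rw [← habs, ← abs_mul]
        congr 1
        ring
      rw [h2] at hd
      nlinarith
    rw [hz1, hz2, hz12]
  exact hxw ▸ rfl

lemma not_discrete_of_dense (hn : 3 ≤ n) {S : Set (V n)} (hS : Dense S) (hne : S.Nonempty) :
    ¬ IsDiscreteSet S := by
  intro hd
  obtain ⟨w, hw⟩ := hne
  obtain ⟨U, hU, hsub⟩ := hd w hw
  haveI : Nonempty (Fin n) := ⟨⟨0, by omega⟩⟩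
  haveI : Nontrivial (V n) := Function.nontrivial
  have hO : IsOpen (interior U ∩ {w}ᶜ) := isOpen_interior.inter isOpen_compl_singleton
  have hOne : (interior U ∩ {w}ᶜ).Nonempty := by
    have h1 : interior U ∩ {w}ᶜ ∈ 𝓝[≠] w :=
      Filter.inter_mem (mem_nhdsWithin_of_mem_nhds (interior_mem_nhds.mpr hU))
        self_mem_nhdsWithin
    exact Filter.nonempty_of_mem h1
  obtain ⟨x, hxS, hxO⟩ := hS.exists_mem_open hO hOne
  exact hxO.2 (hsub ⟨interior_subset hxO.1, hxS⟩)

lemma rep_or_irr {v : V n} (hv : v ≠ 0) :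
    (∃ (lam : ℝ) (u : Fin n → ℚ), u ≠ 0 ∧ v = lam • fun i => ((u i : ℝ))) ∨
      ∃ j k : Fin n, j ≠ k ∧ v k ≠ 0 ∧ ∀ q : ℚ, v j ≠ (q : ℝ) * v k := by
  obtain ⟨k, hk⟩ : ∃ k, v k ≠ 0 := by
    by_contra h
    push_neg at h
    exact hv (funext h)
  by_cases hall : ∀ j, ∃ q : ℚ, v j = (q : ℝ) * v k
  · left
    choose u hu using hall
    have huk : (u k : ℝ) = 1 := by
      have h1 : ((u k : ℝ) - 1) * v k = 0 := by linear_combination -(hu k)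
      rcases mul_eq_zero.mp h1 with h | h
      · linarith [sub_eq_zero.mp h]
      · exact absurd h hk
    refine ⟨v k, u, ?_, ?_⟩
    · intro h0
      rw [h0] at huk
      simp at huk
    · funext i
      rw [Pi.smul_apply, smul_eq_mul, hu i]
      ring
  · right
    push_neg at hall
    obtain ⟨j, hj⟩ := hall
    refine ⟨j, k, ?_, hk, hj⟩
    intro h
    exact hj 1 (by rw [h, Rat.cast_one, one_mul])

end Aux

/-- Let `n ≥ 3` and `Γ` a finite-index subgroup of `SL(n,ℤ)` acting
linearly on `ℝⁿ`. The orbit of any nonzero vector `v` is dense or discrete, and it is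
discrete exactly when `v` is a real multiple of a nonzero rational vector. -/
theorem statement_2 (n : ℕ) (hn : 3 ≤ n) (Γ : Subgroup (SLZ n)) (hΓ : Γ.FiniteIndex)
    (v : V n) (hv : v ≠ 0) :
    (Dense {w : V n | ∃ γ ∈ Γ, lact (slCast γ) v = w} ∨
      IsDiscreteSet {w : V n | ∃ γ ∈ Γ, lact (slCast γ) v = w}) ∧
    (IsDiscreteSet {w : V n | ∃ γ ∈ Γ, lact (slCast γ) v = w} ↔
      ∃ (lam : ℝ) (u : Fin n → ℚ), u ≠ 0 ∧ v = lam • fun i => ((u i : ℝ))) := by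
  have horb : {w : V n | ∃ γ ∈ Γ, lact (slCast γ) v = w} = orb Γ v := rfl
  rw [horb]
  rcases rep_or_irr hv with ⟨lam, u, hu, hvu⟩ | ⟨j, k, hjk, hk, hirr⟩
  · have hdisc := orb_discrete Γ hv lam u hvu
    exact ⟨Or.inr hdisc, fun _ => ⟨lam, u, hu, hvu⟩, fun _ => hdisc⟩
  · have hdense : Dense (orb Γ v) := orb_dense hn Γ hΓ hjk hk hirr
    have hnd : ¬ IsDiscreteSet (orb Γ v) :=
      not_discrete_of_dense hn hdense ⟨v, self_mem_orb Γ v⟩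
    refine ⟨Or.inl hdense, fun hd => (hnd hd).elim, ?_⟩
    rintro ⟨lam, u, hu, hvu⟩
    exfalso
    have hvk : v k = lam * u k := by rw [hvu]; simp
    have hvj : v j = lam * u j := by rw [hvu]; simp
    have huk : (u k : ℝ) ≠ 0 := fun h0 => hk (by rw [hvk, h0, mul_zero])
    have hukQ : (u k : ℚ) ≠ 0 := by exact_mod_cast huk
    apply hirr (u j / u k)
    rw [hvj, hvk]
    push_cast
    field_simp


end Zeghib
end
end

section
/- Let n ≥ 3 and let Γ be a finite-index subgroup of SL(n,ℤ), acting linearly on ℝⁿ. Every nonempty proper closed Γ-invariant subset C of ℝⁿ∖{0} is a finite union of sets of the form Γ·(F·u) = {γ(tu) : γ ∈ Γ, t ∈ F}, where u ∈ ℚⁿ∖{0} is a rational vector and F is a closed subset of [0,∞) not containing 0. -/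
open Set Filter Topology MeasureTheory Matrix Function
noncomputable section
namespace Zeghib

-- ## transvections

lemma transvection_mulVec {R : Type*} [CommRing R] {n : ℕ} (i j : Fin n) (c : R) (v : Fin n → R) :
    (Matrix.transvection i j c).mulVec v = Function.update v i (v i + c * v j) := by
  ext l
  simp only [Matrix.transvection, Matrix.add_mulVec, Matrix.one_mulVec,
    Matrix.single_mulVec, Pi.add_apply]
  rcases eq_or_ne l i with rfl | h
  · simp
  · simp [Function.update_of_ne h]

def TvZ {n : ℕ} (i j : Fin n) (hij : i ≠ j) (c : ℤ) : SLZ n :=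
  ⟨Matrix.transvection i j c, Matrix.det_transvection_of_ne i j hij c⟩

lemma TvZ_mul {n : ℕ} (i j : Fin n) (hij : i ≠ j) (c d : ℤ) :
    TvZ i j hij c * TvZ i j hij d = TvZ i j hij (c + d) := by
  apply Subtype.ext
  exact Matrix.transvection_mul_transvection_same (h := hij) (c := c) (d := d)

lemma TvZ_zero {n : ℕ} (i j : Fin n) (hij : i ≠ j) : TvZ i j hij 0 = 1 := by
  apply Subtype.ext
  simp [TvZ, Matrix.transvection, Matrix.SpecialLinearGroup.coe_one]

lemma TvZ_pow {n : ℕ} (i j : Fin n) (hij : i ≠ j) (c : ℤ) (k : ℕ) :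
    TvZ i j hij c ^ k = TvZ i j hij (k * c) := by
  induction k with
  | zero => simp [TvZ_zero i j hij]
  | succ k ih =>
      rw [pow_succ, ih, TvZ_mul]
      congr 1
      push_cast
      ring

lemma TvZ_inv {n : ℕ} (i j : Fin n) (hij : i ≠ j) (c : ℤ) :
    (TvZ i j hij c)⁻¹ = TvZ i j hij (-c) := by
  apply inv_eq_of_mul_eq_one_right
  rw [TvZ_mul]; simp [TvZ_zero]

lemma TvZ_zpow {n : ℕ} (i j : Fin n) (hij : i ≠ j) (c : ℤ) (k : ℤ) :
    TvZ i j hij c ^ k = TvZ i j hij (k * c) := by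
  cases k with
  | ofNat k => rw [Int.ofNat_eq_coe, zpow_natCast, TvZ_pow]
  | negSucc k =>
      rw [zpow_negSucc, TvZ_pow, TvZ_inv]
      congr 1
      rw [Int.negSucc_eq]
      push_cast
      ring

lemma TvZ_mem {n : ℕ} (Γ : Subgroup (SLZ n)) (hΓ : Γ.FiniteIndex)
    (i j : Fin n) (hij : i ≠ j) (c : ℤ) :
    TvZ i j hij ((Γ.normalCore.index : ℤ) * c) ∈ Γ := by
  have h1 : TvZ i j hij 1 ^ (Γ.normalCore.index : ℤ) ∈ Γ.normalCore := by
    rw [zpow_natCast]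
    exact Subgroup.pow_index_mem _ _
  have h2 : (TvZ i j hij 1 ^ (Γ.normalCore.index : ℤ)) ^ c ∈ Γ.normalCore :=
    Subgroup.zpow_mem _ h1 c
  have h3 : (TvZ i j hij 1 ^ (Γ.normalCore.index : ℤ)) ^ c
      = TvZ i j hij ((Γ.normalCore.index : ℤ) * c) := by
    rw [TvZ_zpow, TvZ_zpow]
    ring_nf
  rw [h3] at h2
  exact Γ.normalCore_le h2

lemma coreIndex_pos {n : ℕ} (Γ : Subgroup (SLZ n)) (hΓ : Γ.FiniteIndex) :
    0 < Γ.normalCore.index := by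
  haveI := hΓ
  haveI : Γ.normalCore.FiniteIndex := Subgroup.finiteIndex_normalCore _
  exact Nat.pos_of_ne_zero Subgroup.FiniteIndex.index_ne_zero

-- action of integral transvections on V n
lemma lact_TvZ {n : ℕ} (i j : Fin n) (hij : i ≠ j) (c : ℤ) (v : V n) :
    lact (slCast (TvZ i j hij c)) v = Function.update v i (v i + (c : ℝ) * v j) := by
  have : ((slCast (TvZ i j hij c) : SLR n) : Matrix (Fin n) (Fin n) ℝ)
      = Matrix.transvection i j (c : ℝ) := by
    ext a b
    show (((TvZ i j hij c : SLZ n) : Matrix (Fin n) (Fin n) ℤ).map (Int.cast : ℤ → ℝ)) a b = _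
    simp [slCast, TvZ, Matrix.SpecialLinearGroup.map, Matrix.transvection,
      Matrix.single, Matrix.one_apply]
  rw [lact, this, transvection_mulVec]


section Dyn
variable {n : ℕ} {C : Set (V n)}

lemma mem_of_closure (hsub : C ⊆ {v : V n | v ≠ 0})
    (hclosed : IsClosed (Subtype.val ⁻¹' C : Set {v : V n // v ≠ 0}))
    {u : V n} (hu : u ≠ 0) (h : u ∈ closure C) : u ∈ C := by
  have h2 : (⟨u, hu⟩ : {v : V n // v ≠ 0}) ∈ closure (Subtype.val ⁻¹' C) := by
    rw [closure_subtype]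
    have : Subtype.val '' (Subtype.val ⁻¹' C : Set {v : V n // v ≠ 0}) = C := by
      rw [Set.image_preimage_eq_inter_range, Subtype.range_val_subtype]
      exact Set.inter_eq_self_of_subset_left hsub
    rw [this]
    exact h
  have := hclosed.closure_eq ▸ h2
  exact this

lemma update_eq_add_single (v : V n) (i : Fin n) (d : ℝ) :
    Function.update v i (v i + d) = v + d • (Pi.single i (1:ℝ) : V n) := by
  funext l
  rcases eq_or_ne l i with rfl | h
  · simp
  · simp [Function.update_of_ne h, Pi.single_apply, h]


lemma set_coord {Γ : Subgroup (SLZ n)} (hΓ : Γ.FiniteIndex)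
    (hsub : C ⊆ {v : V n | v ≠ 0})
    (hclosed : IsClosed (Subtype.val ⁻¹' C : Set {v : V n // v ≠ 0}))
    (hinv : ∀ γ ∈ Γ, ∀ v ∈ C, lact (slCast γ) v ∈ C)
    {v : V n} (hv : v ∈ C) (i j k : Fin n)
    (hij : i ≠ j) (hik : i ≠ k) (hjk : j ≠ k)
    (hirr : Irrational (v j / v k)) (s : ℝ) :
    Function.update v i s ∈ C := by
  have hvk : v k ≠ 0 := by
    intro h
    exact hirr ⟨0, by simp [h]⟩
  set m : ℤ := (Γ.normalCore.index : ℤ) with hm_def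
  have hmpos : (0:ℤ) < m := by rw [hm_def]; exact_mod_cast coreIndex_pos Γ hΓ
  have hmR : (m:ℝ) ≠ 0 := by exact_mod_cast hmpos.ne'
  set S : AddSubgroup ℝ := AddSubgroup.closure {(m:ℝ) * v j, (m:ℝ) * v k} with hS_def
  have hdense : Dense (S : Set ℝ) := by
    rcases AddSubgroup.dense_or_cyclic S with h | ⟨a, ha⟩
    · exact h
    · exfalso
      have hj : (m:ℝ) * v j ∈ S := AddSubgroup.subset_closure (by left; rfl)
      have hk : (m:ℝ) * v k ∈ S := AddSubgroup.subset_closure (by right; rfl)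
      rw [ha, AddSubgroup.mem_closure_singleton] at hj hk
      obtain ⟨zj, hzj⟩ := hj
      obtain ⟨zk, hzk⟩ := hk
      have hka : (m:ℝ) * v k ≠ 0 := mul_ne_zero hmR hvk
      have ha0 : a ≠ 0 := by
        intro h0; rw [h0, smul_zero] at hzk; exact hka hzk.symm
      have hzk0 : (zk:ℝ) ≠ 0 := by
        intro h0; rw [zsmul_eq_mul, h0, zero_mul] at hzk; exact hka hzk.symm
      apply hirr
      refine ⟨(zj : ℚ)/(zk : ℚ), ?_⟩
      rw [zsmul_eq_mul] at hzj hzk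
      have : v j / v k = ((m:ℝ) * v j) / ((m:ℝ) * v k) := by
        field_simp
      rw [this, ← hzj, ← hzk]
      rw [mul_div_mul_right _ _ ha0]
      push_cast
      ring
  have hmem : ∀ d ∈ S, Function.update v i (v i + d) ∈ C := by
    intro d hd
    rw [hS_def, AddSubgroup.mem_closure_pair] at hd
    obtain ⟨a, b, hab⟩ := hd
    have h1 := hinv _ (TvZ_mem Γ hΓ i j hij a) v hv
    rw [lact_TvZ] at h1
    have h2 := hinv _ (TvZ_mem Γ hΓ i k hik b) _ h1
    rw [lact_TvZ] at h2
    rw [Function.update_idem, Function.update_self,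
      Function.update_of_ne (Ne.symm hik)] at h2
    have harr : v i + (↑(m * a) : ℝ) * v j + (↑(m * b) : ℝ) * v k = v i + d := by
      rw [← hab]
      push_cast [zsmul_eq_mul]
      ring
    rwa [harr] at h2
  have hclo : Function.update v i s ∈ closure C := by
    set g : ℝ → V n := fun d => v + d • (Pi.single i (1:ℝ) : V n) with hg_def
    have hgc : Continuous g := by
      apply Continuous.add continuous_const
      exact (continuous_id.smul continuous_const)
    have himg : g '' (S : Set ℝ) ⊆ C := by
      rintro _ ⟨d, hd, rfl⟩
      show v + d • (Pi.single i (1:ℝ) : V n) ∈ C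
      rw [← update_eq_add_single]
      exact hmem d hd
    have h1 : (s - v i) ∈ closure (S : Set ℝ) := hdense _
    have h2 : g (s - v i) ∈ closure (g '' (S : Set ℝ)) := by
      exact image_closure_subset_closure_image hgc ⟨_, h1, rfl⟩
    have h3 : closure (g '' (S : Set ℝ)) ⊆ closure C := closure_mono himg
    have h4 : g (s - v i) = Function.update v i s := by
      rw [hg_def]
      have := update_eq_add_single v i (s - v i)
      simp only [add_sub_cancel] at this
      exact this.symm
    rw [← h4]
    exact h3 h2
  apply mem_of_closure hsub hclosed _ hclo
  intro h0
  apply hvk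
  have := congrFun h0 k
  rwa [Function.update_of_ne (Ne.symm hik)] at this


lemma exists_irr (a b c δ : ℝ) (ha : a ≠ 0) (hb : b ≠ 0) (hδ : 0 < δ) :
    ∃ x : ℝ, |x - c| < δ ∧ Irrational (x / a) ∧ Irrational (x / b) := by
  by_contra hcon
  push_neg at hcon
  have hsub2 : Ioo (c - δ) (c + δ) ⊆
      (range fun q : ℚ => (q:ℝ) * a) ∪ (range fun q : ℚ => (q:ℝ) * b) := by
    intro x hx
    rw [mem_Ioo] at hx
    have hx' : |x - c| < δ := abs_lt.mpr ⟨by linarith [hx.1], by linarith [hx.2]⟩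
    by_cases hA : Irrational (x / a)
    · obtain ⟨q, hq⟩ := not_not.mp (hcon x hx' hA)
      right
      refine ⟨q, ?_⟩
      show (q:ℝ) * b = x
      rw [hq]; field_simp
    · obtain ⟨q, hq⟩ := not_not.mp hA
      left
      refine ⟨q, ?_⟩
      show (q:ℝ) * a = x
      rw [hq]; field_simp
  have hc1 : ((range fun q : ℚ => (q:ℝ) * a) ∪ (range fun q : ℚ => (q:ℝ) * b)).Countable :=
    (Set.countable_range _).union (Set.countable_range _)
  have hz := hc1.measure_zero (μ := volume)
  have hm : volume (Ioo (c - δ) (c + δ)) ≤ 0 :=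
    le_trans (measure_mono hsub2) (le_of_eq hz)
  rw [Real.volume_Ioo] at hm
  have h2δ : (0:ℝ) < c + δ - (c - δ) := by linarith
  have := ENNReal.ofReal_pos.mpr h2δ
  exact (not_le_of_gt this) hm

lemma multi_update {Γ : Subgroup (SLZ n)} (hΓ : Γ.FiniteIndex)
    (hsub : C ⊆ {v : V n | v ≠ 0})
    (hclosed : IsClosed (Subtype.val ⁻¹' C : Set {v : V n // v ≠ 0}))
    (hinv : ∀ γ ∈ Γ, ∀ v ∈ C, lact (slCast γ) v ∈ C)
    (j k : Fin n) (hjk : j ≠ k) :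
    ∀ (d : ℕ) (v w : V n), v ∈ C → Irrational (v j / v k) → w j = v j → w k = v k →
      (Finset.univ.filter (fun l => w l ≠ v l)).card ≤ d → w ∈ C := by
  intro d
  induction d with
  | zero =>
      intro v w hv hirr hwj hwk hcard
      have he : (Finset.univ.filter (fun l => w l ≠ v l)) = ∅ :=
        Finset.card_eq_zero.mp (Nat.le_zero.mp hcard)
      have hw : w = v := by
        funext l
        by_contra h
        have : l ∈ (Finset.univ.filter (fun l => w l ≠ v l)) :=
          Finset.mem_filter.mpr ⟨Finset.mem_univ l, h⟩
        rw [he] at this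
        exact absurd this (Finset.notMem_empty l)
      rwa [hw]
  | succ d ih =>
      intro v w hv hirr hwj hwk hcard
      rcases Finset.eq_empty_or_nonempty (Finset.univ.filter (fun l => w l ≠ v l)) with he | hne
      · have hw : w = v := by
          funext l
          by_contra h
          have : l ∈ (Finset.univ.filter (fun l => w l ≠ v l)) :=
            Finset.mem_filter.mpr ⟨Finset.mem_univ l, h⟩
          rw [he] at this
          exact absurd this (Finset.notMem_empty l)
        rwa [hw]
      · obtain ⟨i, hi⟩ := hne
        have hiwv : w i ≠ v i := (Finset.mem_filter.mp hi).2
        have hij : i ≠ j := by rintro rfl; exact hiwv hwj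
        have hik : i ≠ k := by rintro rfl; exact hiwv hwk
        set v' := Function.update v i (w i) with hv'def
        have hv'C : v' ∈ C := set_coord hΓ hsub hclosed hinv hv i j k hij hik hjk hirr (w i)
        have hv'j : v' j = v j := Function.update_of_ne (Ne.symm hij) _ _
        have hv'k : v' k = v k := Function.update_of_ne (Ne.symm hik) _ _
        apply ih v' w hv'C
        · rw [hv'j, hv'k]; exact hirr
        · rw [hv'j]; exact hwj
        · rw [hv'k]; exact hwk
        · have hsubset : (Finset.univ.filter (fun l => w l ≠ v' l)) ⊆
              (Finset.univ.filter (fun l => w l ≠ v l)).erase i := by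
            intro l hl
            have hl' := (Finset.mem_filter.mp hl).2
            have hli : l ≠ i := by
              rintro rfl
              rw [hv'def, Function.update_self] at hl'
              exact hl' rfl
            refine Finset.mem_erase.mpr ⟨hli, Finset.mem_filter.mpr ⟨Finset.mem_univ l, ?_⟩⟩
            rwa [hv'def, Function.update_of_ne hli] at hl'
          calc (Finset.univ.filter (fun l => w l ≠ v' l)).card
              ≤ ((Finset.univ.filter (fun l => w l ≠ v l)).erase i).card :=
                Finset.card_le_card hsubset
            _ ≤ (Finset.univ.filter (fun l => w l ≠ v l)).card - 1 :=
                le_of_eq (Finset.card_erase_of_mem hi)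
            _ ≤ d := by omega


lemma exists_third (hn : 3 ≤ n) (j k : Fin n) : ∃ i0 : Fin n, i0 ≠ j ∧ i0 ≠ k := by
  by_contra h
  push_neg at h
  have hsub3 : (Finset.univ : Finset (Fin n)) ⊆ {j, k} := by
    intro i _
    rcases eq_or_ne i j with rfl | hij
    · simp
    · simp [h i hij]
  have := Finset.card_le_card hsub3
  simp only [Finset.card_univ, Fintype.card_fin] at this
  have h2 : ({j, k} : Finset (Fin n)).card ≤ 2 := Finset.card_insert_le _ _ |>.trans (by simp)
  omega

lemma dense_case {Γ : Subgroup (SLZ n)} (hΓ : Γ.FiniteIndex) (hn : 3 ≤ n)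
    (hsub : C ⊆ {v : V n | v ≠ 0})
    (hclosed : IsClosed (Subtype.val ⁻¹' C : Set {v : V n // v ≠ 0}))
    (hinv : ∀ γ ∈ Γ, ∀ v ∈ C, lact (slCast γ) v ∈ C)
    {v : V n} (hv : v ∈ C) (j k : Fin n) (hjk : j ≠ k)
    (hirr : Irrational (v j / v k)) : ∀ w : V n, w ≠ 0 → w ∈ C := by
  have hvk : v k ≠ 0 := fun h => hirr ⟨0, by simp [h]⟩
  obtain ⟨i0, hi0j, hi0k⟩ := exists_third hn j k
  intro w hw
  apply mem_of_closure hsub hclosed hw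
  rw [Metric.mem_closure_iff]
  intro ε hε
  set y : ℝ := if w j = 0 then ε/2 else w j with hy_def
  have hy0 : y ≠ 0 := by
    rw [hy_def]; split_ifs with h
    · positivity
    · exact h
  have hyd : |y - w j| ≤ ε/2 := by
    rw [hy_def]; split_ifs with h
    · rw [h]; simp [abs_of_pos (by positivity : (0:ℝ) < ε/2)]
    · simp; positivity
  obtain ⟨x, hxd, hxa, hxb⟩ := exists_irr (v k) y (w i0) (ε/2) hvk hy0 (by positivity)
  set u1 : V n := fun l => if l = j then v j else if l = k then v k else
    (if l = i0 then x else w l) with hu1_def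
  have hu1C : u1 ∈ C := by
    apply multi_update hΓ hsub hclosed hinv j k hjk n v u1 hv hirr
    · simp [hu1_def]
    · simp [hu1_def, hjk.symm ∘ Eq.symm]
      intro h; exact absurd h hjk.symm
    · calc (Finset.univ.filter (fun l => u1 l ≠ v l)).card
          ≤ (Finset.univ : Finset (Fin n)).card := Finset.card_le_card (Finset.filter_subset _ _)
        _ = n := by simp
  have hu1i0 : u1 i0 = x := by simp [hu1_def, hi0j, hi0k]
  have hu1k : u1 k = v k := by simp [hu1_def, hjk.symm ∘ Eq.symm]; intro h; exact absurd h hjk.symm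
  have hu2C : Function.update u1 j y ∈ C := by
    apply set_coord hΓ hsub hclosed hinv hu1C j i0 k (Ne.symm hi0j) hjk hi0k
    rw [hu1i0, hu1k]
    exact hxa
  set u2 := Function.update u1 j y with hu2_def
  have hu2i0 : u2 i0 = x := by rw [hu2_def, Function.update_of_ne hi0j, hu1i0]
  have hu2j : u2 j = y := by rw [hu2_def, Function.update_self]
  have hu3C : Function.update u2 k (w k) ∈ C := by
    apply set_coord hΓ hsub hclosed hinv hu2C k i0 j (Ne.symm hi0k) (Ne.symm hjk) hi0j
    rw [hu2i0, hu2j]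
    exact hxb
  refine ⟨_, hu3C, ?_⟩
  rw [dist_pi_lt_iff hε]
  intro l
  rcases eq_or_ne l k with rfl | hlk
  · rw [Function.update_self]; simpa using hε
  rw [Function.update_of_ne hlk]
  rcases eq_or_ne l j with hlj' | hlj
  · rw [hlj', hu2j, Real.dist_eq, abs_sub_comm]
    calc |y - w j| ≤ ε/2 := hyd
      _ < ε := by linarith
  rw [hu2_def, Function.update_of_ne hlj]
  rcases eq_or_ne l i0 with hli0' | hli0
  · rw [hli0', hu1i0, Real.dist_eq, abs_sub_comm]
    calc |x - w i0| < ε/2 := hxd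
      _ < ε := by linarith
  · have : u1 l = w l := by simp [hu1_def, hlj, hlk, hli0]
    rw [this]
    simpa using hε


lemma no_irr {Γ : Subgroup (SLZ n)} (hΓ : Γ.FiniteIndex) (hn : 3 ≤ n)
    (hsub : C ⊆ {v : V n | v ≠ 0})
    (hclosed : IsClosed (Subtype.val ⁻¹' C : Set {v : V n // v ≠ 0}))
    (hinv : ∀ γ ∈ Γ, ∀ v ∈ C, lact (slCast γ) v ∈ C)
    (hproper : C ≠ {v : V n | v ≠ 0}) :
    ∀ v ∈ C, ∀ j k : Fin n, j ≠ k → ¬ Irrational (v j / v k) := by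
  intro v hv j k hjk hirr
  apply hproper
  exact Set.Subset.antisymm hsub
    (fun w hw => dense_case hΓ hn hsub hclosed hinv hv j k hjk hirr w hw)

lemma eps_bound {Γ : Subgroup (SLZ n)} (hΓ : Γ.FiniteIndex) (hn : 3 ≤ n)
    (hsub : C ⊆ {v : V n | v ≠ 0})
    (hclosed : IsClosed (Subtype.val ⁻¹' C : Set {v : V n // v ≠ 0}))
    (hinv : ∀ γ ∈ Γ, ∀ v ∈ C, lact (slCast γ) v ∈ C)
    (hproper : C ≠ {v : V n | v ≠ 0}) :
    ∃ ε : ℝ, 0 < ε ∧ ∀ v ∈ C, ε ≤ ‖v‖ := by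
  have hnoirr := no_irr hΓ hn hsub hclosed hinv hproper
  by_contra hcon
  push_neg at hcon
  have hcon' : ∀ ε : ℝ, 0 < ε → ∃ v ∈ C, ‖v‖ < ε := by
    intro ε hε
    obtain ⟨v, hv, hlt⟩ := hcon ε hε
    exact ⟨v, hv, hlt⟩
  have hnpos : 0 < n := by omega
  haveI : Nonempty (Fin n) := ⟨⟨0, hnpos⟩⟩
  have hj0 : ∃ j0 : Fin n, ∀ ε : ℝ, 0 < ε → ∃ v ∈ C, ‖v‖ < ε ∧ v j0 ≠ 0 := by
    by_contra h2
    push_neg at h2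
    choose εf hεf h0 using h2
    set εm := Finset.univ.inf' Finset.univ_nonempty εf with hεm_def
    have hεm : 0 < εm := by
      rw [hεm_def, Finset.lt_inf'_iff]
      exact fun i _ => hεf i
    obtain ⟨v, hv, hvn⟩ := hcon' εm hεm
    have hv0 : v = 0 := by
      funext l
      exact h0 l v hv (lt_of_lt_of_le hvn (Finset.inf'_le _ (Finset.mem_univ l)))
    exact hsub hv hv0
  obtain ⟨j0, hj0⟩ := hj0
  obtain ⟨i, hij0, -⟩ := exists_third hn j0 j0
  obtain ⟨i', hi'i, hi'j0⟩ := exists_third hn i j0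
  set m : ℕ := Γ.normalCore.index with hm_def
  have hmpos : 0 < m := coreIndex_pos Γ hΓ
  have hm1 : (1:ℝ) ≤ (m:ℝ) := by exact_mod_cast hmpos
  set w : V n := (Pi.single i (1:ℝ) : V n) + (Pi.single i' (Real.sqrt 2) : V n) with hw_def
  have hwi : w i = 1 := by
    rw [hw_def]
    simp [Pi.single_apply, Ne.symm hi'i]
  have hwi' : w i' = Real.sqrt 2 := by
    rw [hw_def]
    simp [Pi.single_apply, hi'i]
  have hwl : ∀ l, l ≠ i → l ≠ i' → w l = 0 := by
    intro l hl hl'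
    rw [hw_def]
    simp [Pi.single_apply, hl, hl']
  have hw0 : w ≠ 0 := by
    intro h
    have := congrFun h i
    rw [hwi] at this
    exact one_ne_zero this
  have hwC : w ∈ C := by
    apply mem_of_closure hsub hclosed hw0
    rw [Metric.mem_closure_iff]
    intro ε hε
    set δ : ℝ := ε / (2 * m + 2) with hδ_def
    have hδpos : 0 < δ := by positivity
    have hδe : δ * (2 * m + 2) = ε := by
      rw [hδ_def]
      field_simp
    obtain ⟨v, hvC, hvn, hvj0⟩ := hj0 δ hδpos
    set t : ℝ := (m:ℝ) * v j0 with ht_def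
    have hmR : (0:ℝ) < (m:ℝ) := by exact_mod_cast hmpos
    have ht0 : t ≠ 0 := mul_ne_zero (ne_of_gt hmR) hvj0
    have htb : |t| ≤ (m:ℝ) * δ := by
      rw [ht_def, abs_mul, abs_of_nonneg (le_of_lt hmR)]
      have hvj : |v j0| ≤ ‖v‖ := by
        simpa using norm_le_pi_norm v j0
      have : |v j0| ≤ δ := le_of_lt (lt_of_le_of_lt hvj hvn)
      exact mul_le_mul_of_nonneg_left this (le_of_lt hmR)
    set a : ℤ := round ((1 - v i) / t) with ha_def
    have hv1C : Function.update v i (v i + ((m * a : ℤ):ℝ) * v j0) ∈ C := by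
      have := hinv _ (TvZ_mem Γ hΓ i j0 hij0 a) v hvC
      rwa [lact_TvZ] at this
    set v1 := Function.update v i (v i + ((m * a : ℤ):ℝ) * v j0) with hv1_def
    have key : ∀ (c s : ℝ), |s - (round ((s - c) / t) : ℤ) * t - c| ≤ |t| / 2 → True := fun _ _ _ => trivial
    have hv1i : |v1 i - 1| ≤ |t| / 2 := by
      rw [hv1_def, Function.update_self]
      have hr : |(1 - v i)/t - (a:ℝ)| ≤ 1/2 := by
        rw [ha_def]
        exact_mod_cast abs_sub_round ((1 - v i) / t)
      have hEq : v i + ((m * a : ℤ):ℝ) * v j0 - 1 = -(t * ((1 - v i)/t - (a:ℝ))) := by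
        push_cast
        field_simp [ht_def]
        ring
      rw [hEq, abs_neg, abs_mul]
      calc |t| * |(1 - v i)/t - (a:ℝ)| ≤ |t| * (1/2) :=
            mul_le_mul_of_nonneg_left hr (abs_nonneg t)
        _ = |t|/2 := by ring
    have hv1j0 : v1 j0 = v j0 := Function.update_of_ne (Ne.symm hij0) _ _
    have hv1i' : v1 i' = v i' := Function.update_of_ne hi'i _ _
    set b : ℤ := round ((Real.sqrt 2 - v i') / t) with hb_def
    have hv2C : Function.update v1 i' (v1 i' + ((m * b : ℤ):ℝ) * v1 j0) ∈ C := by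
      have := hinv _ (TvZ_mem Γ hΓ i' j0 hi'j0 b) v1 hv1C
      rwa [lact_TvZ] at this
    set v2 := Function.update v1 i' (v1 i' + ((m * b : ℤ):ℝ) * v1 j0) with hv2_def
    have hv2i' : |v2 i' - Real.sqrt 2| ≤ |t| / 2 := by
      rw [hv2_def, Function.update_self, hv1i', hv1j0]
      have hr : |(Real.sqrt 2 - v i')/t - (b:ℝ)| ≤ 1/2 := by
        rw [hb_def]
        exact_mod_cast abs_sub_round ((Real.sqrt 2 - v i') / t)
      have hEq : v i' + ((m * b : ℤ):ℝ) * v j0 - Real.sqrt 2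
          = -(t * ((Real.sqrt 2 - v i')/t - (b:ℝ))) := by
        push_cast
        field_simp [ht_def]
        ring
      rw [hEq, abs_neg, abs_mul]
      calc |t| * |(Real.sqrt 2 - v i')/t - (b:ℝ)| ≤ |t| * (1/2) :=
            mul_le_mul_of_nonneg_left hr (abs_nonneg t)
        _ = |t|/2 := by ring
    have hv2i : v2 i = v1 i := Function.update_of_ne (Ne.symm hi'i) _ _
    have hbound : |t| / 2 < ε := by
      have h1 : (m:ℝ) * δ < ε := by nlinarith
      nlinarith [abs_nonneg t]
    refine ⟨v2, hv2C, ?_⟩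
    rw [dist_pi_lt_iff hε]
    intro l
    rcases eq_or_ne l i with hli | hli
    · rw [hli, Real.dist_eq, hwi, hv2i, abs_sub_comm]
      exact lt_of_le_of_lt hv1i hbound
    rcases eq_or_ne l i' with hli' | hli'
    · rw [hli', Real.dist_eq, hwi', abs_sub_comm]
      exact lt_of_le_of_lt hv2i' hbound
    · have hv2l : v2 l = v l := by
        rw [hv2_def, Function.update_of_ne hli', hv1_def, Function.update_of_ne hli]
      rw [Real.dist_eq, hwl l hli hli', hv2l, zero_sub, abs_neg]
      have hvl : |v l| ≤ ‖v‖ := by simpa using norm_le_pi_norm v l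
      have : |v l| < δ := lt_of_le_of_lt hvl hvn
      nlinarith
  apply hnoirr w hwC i' i hi'i
  rw [hwi', hwi, div_one]
  exact irrational_sqrt_two


end Dyn

/-- Primitivity of an integer vector: the gcd of its coordinates is 1. -/
def PrimV {n : ℕ} (p : Fin n → ℤ) : Prop := Finset.univ.gcd p = 1

lemma int_gcd_nonneg {β : Type*} (s : Finset β) (f : β → ℤ) : 0 ≤ s.gcd f := by
  have h := Finset.normalize_gcd (s := s) (f := f)
  rw [← Int.abs_eq_normalize] at h
  rw [← h]
  exact abs_nonneg _

lemma primV_neg {n : ℕ} {p : Fin n → ℤ} (hp : PrimV p) : PrimV (fun l => -(p l)) := by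
  unfold PrimV at *
  have h1 : Finset.univ.gcd (fun l => -(p l)) ∣ Finset.univ.gcd p :=
    Finset.dvd_gcd fun b _ =>
      dvd_neg.mp (Finset.gcd_dvd (f := fun l => -(p l)) (Finset.mem_univ b))
  have h2 : Finset.univ.gcd p ∣ Finset.univ.gcd (fun l => -(p l)) :=
    Finset.dvd_gcd fun b _ => dvd_neg.mpr (Finset.gcd_dvd (Finset.mem_univ b))
  rw [Int.dvd_antisymm (int_gcd_nonneg _ _) (int_gcd_nonneg _ _) h1 h2, hp]

section Rat1
variable {n : ℕ} {C : Set (V n)}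

lemma rational_struct {Γ : Subgroup (SLZ n)} (hΓ : Γ.FiniteIndex) (hn : 3 ≤ n)
    (hsub : C ⊆ {v : V n | v ≠ 0})
    (hclosed : IsClosed (Subtype.val ⁻¹' C : Set {v : V n // v ≠ 0}))
    (hinv : ∀ γ ∈ Γ, ∀ v ∈ C, lact (slCast γ) v ∈ C)
    (hproper : C ≠ {v : V n | v ≠ 0}) {v : V n} (hv : v ∈ C) :
    ∃ (t : ℝ) (p : Fin n → ℤ), 0 < t ∧ PrimV p ∧ v = t • (fun l => ((p l : ℝ))) := by
  have hnoirr := no_irr hΓ hn hsub hclosed hinv hproper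
  have hvne : v ≠ 0 := hsub hv
  obtain ⟨k₀, hk₀⟩ : ∃ k₀, v k₀ ≠ 0 := by
    by_contra h
    push_neg at h
    exact hvne (funext h)
  have hq : ∀ l, ∃ ql : ℚ, (ql : ℝ) = v l / v k₀ := by
    intro l
    rcases eq_or_ne l k₀ with rfl | hl
    · exact ⟨1, by simp [div_self hk₀]⟩
    · exact not_not.mp (hnoirr v hv l k₀ hl)
  choose q hq using hq
  set d : ℕ := ∏ l, (q l).den with hd_def
  have hdpos : 0 < d := Finset.prod_pos fun l _ => (q l).pos
  have hdd : ∀ l, (q l).den ∣ d := fun l => Finset.dvd_prod_of_mem _ (Finset.mem_univ l)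
  set z : Fin n → ℤ := fun l => (q l).num * ((d / (q l).den : ℕ) : ℤ) with hz_def
  have hzq : ∀ l, ((z l : ℚ)) = q l * d := by
    intro l
    obtain ⟨e, he⟩ := hdd l
    have hden0 : ((q l).den : ℚ) ≠ 0 := by exact_mod_cast (q l).pos.ne'
    have hde : d / (q l).den = e := by rw [he]; exact Nat.mul_div_cancel_left e (q l).pos
    rw [hz_def]
    push_cast [hde]
    conv_rhs => rw [← Rat.num_div_den (q l), he]
    push_cast
    field_simp
  have hqk₀ : q k₀ = 1 := by
    have h1 : ((q k₀ : ℚ) : ℝ) = ((1:ℚ) : ℝ) := by rw [hq k₀, div_self hk₀]; norm_num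
    exact_mod_cast h1
  have hzk₀ : z k₀ ≠ 0 := by
    intro h
    have h1 := hzq k₀
    rw [h, hqk₀, one_mul] at h1
    have h2 : (d:ℚ) = 0 := by exact_mod_cast h1.symm
    have h3 : d = 0 := by exact_mod_cast h2
    omega
  set g : ℤ := Finset.univ.gcd z with hg_def
  have hgdvd : ∀ l, g ∣ z l := fun l => Finset.gcd_dvd (Finset.mem_univ l)
  have hg0 : g ≠ 0 := by
    intro h
    rw [hg_def, Finset.gcd_eq_zero_iff] at h
    exact hzk₀ (h k₀ (Finset.mem_univ k₀))
  set p : Fin n → ℤ := fun l => z l / g with hp_def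
  have hzp : ∀ l, z l = g * p l := fun l => (Int.mul_ediv_cancel' (hgdvd l)).symm
  have hprim : PrimV p := by
    unfold PrimV
    rw [hp_def, hg_def]
    exact Finset.gcd_div_eq_one (Finset.mem_univ k₀) hzk₀
  have hvl : ∀ l, v l = (v k₀ * g / d) * (p l : ℝ) := by
    intro l
    have h1 : v l = (q l : ℝ) * v k₀ := by
      rw [hq l]
      field_simp
    have h2 : ((z l : ℝ)) = (q l : ℝ) * d := by exact_mod_cast hzq l
    have h3 : ((z l : ℝ)) = (g : ℝ) * (p l : ℝ) := by exact_mod_cast hzp l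
    have hdR : (d : ℝ) ≠ 0 := by exact_mod_cast hdpos.ne'
    rw [h1]
    rw [show (q l : ℝ) = ((z l : ℝ)) / d by rw [h2]; field_simp]
    rw [h3]
    field_simp
  set t' : ℝ := v k₀ * g / d with ht'_def
  have hvt : v = t' • (fun l => ((p l : ℝ))) := by
    funext l
    simp only [Pi.smul_apply, smul_eq_mul]
    exact hvl l
  have ht'0 : t' ≠ 0 := by
    intro h
    apply hk₀
    have := hvl k₀
    rwa [h, zero_mul] at this
  rcases lt_or_gt_of_ne ht'0 with hneg | hpos
  · refine ⟨-t', fun l => -(p l), by linarith, primV_neg hprim, ?_⟩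
    funext l
    simp only [Pi.smul_apply, smul_eq_mul, Int.cast_neg]
    rw [hvl l]
    ring
  · exact ⟨t', p, hpos, hprim, hvt⟩

end Rat1

section Transitive
variable {n : ℕ}

lemma TvZ_coe (i j : Fin n) (hij : i ≠ j) (c : ℤ) :
    ((TvZ i j hij c : SLZ n) : Matrix (Fin n) (Fin n) ℤ) = Matrix.transvection i j c := rfl

lemma comp_step {target : Fin n → ℤ} (i j : Fin n) (hij : i ≠ j) (c : ℤ) (p : Fin n → ℤ)
    (h : ∃ A : SLZ n,
      (A : Matrix (Fin n) (Fin n) ℤ).mulVec (Function.update p i (p i + c * p j)) = target) :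
    ∃ A : SLZ n, (A : Matrix (Fin n) (Fin n) ℤ).mulVec p = target := by
  obtain ⟨A, hA⟩ := h
  refine ⟨A * TvZ i j hij c, ?_⟩
  rw [Matrix.SpecialLinearGroup.coe_mul, ← Matrix.mulVec_mulVec, TvZ_coe, transvection_mulVec]
  exact hA

lemma gcd_update (p : Fin n → ℤ) (i j : Fin n) (hij : i ≠ j) (c : ℤ) :
    Finset.univ.gcd (Function.update p i (p i + c * p j)) = Finset.univ.gcd p := by
  set p' := Function.update p i (p i + c * p j) with hp'
  have hj : p' j = p j := Function.update_of_ne (Ne.symm hij) _ _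
  have hi : p' i = p i + c * p j := Function.update_self _ _ _
  apply Int.dvd_antisymm (int_gcd_nonneg _ _) (int_gcd_nonneg _ _)
  · apply Finset.dvd_gcd
    intro b _
    rcases eq_or_ne b i with rfl | hb
    · have h1 : Finset.univ.gcd p' ∣ p' b := Finset.gcd_dvd (Finset.mem_univ b)
      have h2 : Finset.univ.gcd p' ∣ p' j := Finset.gcd_dvd (Finset.mem_univ j)
      rw [hi] at h1
      rw [hj] at h2
      have := dvd_sub h1 (h2.mul_left c)
      simpa using this
    · have h1 : Finset.univ.gcd p' ∣ p' b := Finset.gcd_dvd (Finset.mem_univ b)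
      have hb' : p' b = p b := by rw [hp']; exact Function.update_of_ne hb _ _
      rwa [hb'] at h1
  · apply Finset.dvd_gcd
    intro b _
    rcases eq_or_ne b i with rfl | hb
    · rw [hi]
      exact dvd_add (Finset.gcd_dvd (Finset.mem_univ b))
        ((Finset.gcd_dvd (Finset.mem_univ j)).mul_left c)
    · have hb' : p' b = p b := by rw [hp']; exact Function.update_of_ne hb _ _
      rw [hb']
      exact Finset.gcd_dvd (Finset.mem_univ b)

lemma single_case (hn2 : 2 ≤ n) (l : Fin n) (x : ℤ) (hx : x = 1 ∨ x = -1) :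
    ∃ A : SLZ n, (A : Matrix (Fin n) (Fin n) ℤ).mulVec (fun b => if b = l then x else 0)
      = Pi.single (⟨0, by omega⟩ : Fin n) (1:ℤ) := by
  set i₀ : Fin n := ⟨0, by omega⟩ with hi₀
  set i₁ : Fin n := ⟨1, by omega⟩ with hi₁
  have h01 : i₀ ≠ i₁ := by simp [hi₀, hi₁, Fin.ext_iff]
  have main : ∀ y : ℤ, y = 1 ∨ y = -1 →
      ∃ A : SLZ n, (A : Matrix (Fin n) (Fin n) ℤ).mulVec (fun b => if b = i₀ then y else 0)
        = Pi.single i₀ (1:ℤ) := by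
    intro y hy
    rcases hy with rfl | rfl
    · refine ⟨1, ?_⟩
      rw [Matrix.SpecialLinearGroup.coe_one, Matrix.one_mulVec]
      funext b
      rcases eq_or_ne b i₀ with rfl | hb
      · simp
      · simp [hb, Pi.single_eq_of_ne hb]
    · apply comp_step i₁ i₀ (Ne.symm h01) 1
      have e1 : Function.update (fun b => if b = i₀ then (-1:ℤ) else 0) i₁
          ((fun b => if b = i₀ then (-1:ℤ) else 0) i₁
            + 1 * (fun b => if b = i₀ then (-1:ℤ) else 0) i₀)
          = fun b => if b = i₀ then (-1:ℤ) else if b = i₁ then -1 else 0 := by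
        funext b
        rcases eq_or_ne b i₁ with rfl | hb
        · rw [Function.update_self]
          simp [Ne.symm h01]
        · rw [Function.update_of_ne hb]
          by_cases hb0 : b = i₀ <;> simp [hb0, hb]
      rw [e1]
      apply comp_step i₀ i₁ h01 (-2)
      have e2 : Function.update
          (fun b => if b = i₀ then (-1:ℤ) else if b = i₁ then -1 else 0) i₀
          ((fun b => if b = i₀ then (-1:ℤ) else if b = i₁ then -1 else 0) i₀
            + (-2) * (fun b => if b = i₀ then (-1:ℤ) else if b = i₁ then -1 else 0) i₁)
          = fun b => if b = i₀ then (1:ℤ) else if b = i₁ then -1 else 0 := by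
        funext b
        rcases eq_or_ne b i₀ with rfl | hb
        · rw [Function.update_self]
          simp [h01]
        · rw [Function.update_of_ne hb]
          simp [hb]
      rw [e2]
      apply comp_step i₁ i₀ (Ne.symm h01) 1
      have e3 : Function.update
          (fun b => if b = i₀ then (1:ℤ) else if b = i₁ then -1 else 0) i₁
          ((fun b => if b = i₀ then (1:ℤ) else if b = i₁ then -1 else 0) i₁
            + 1 * (fun b => if b = i₀ then (1:ℤ) else if b = i₁ then -1 else 0) i₀)
          = fun b => if b = i₀ then (1:ℤ) else 0 := by
        funext b
        rcases eq_or_ne b i₁ with rfl | hb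
        · rw [Function.update_self]
          simp [Ne.symm h01, h01]
        · rw [Function.update_of_ne hb]
          simp [hb]
      rw [e3]
      refine ⟨1, ?_⟩
      rw [Matrix.SpecialLinearGroup.coe_one, Matrix.one_mulVec]
      funext b
      rcases eq_or_ne b i₀ with rfl | hb
      · simp
      · simp [hb, Pi.single_eq_of_ne hb]
  rcases eq_or_ne l i₀ with rfl | hl
  · exact main x hx
  · apply comp_step i₀ l (Ne.symm hl) 1
    have e4 : Function.update (fun b => if b = l then x else 0) i₀
        ((fun b => if b = l then x else 0) i₀ + 1 * (fun b => if b = l then x else 0) l)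
        = fun b => if b = l then x else if b = i₀ then x else 0 := by
      funext b
      rcases eq_or_ne b i₀ with rfl | hb
      · rw [Function.update_self]
        simp [hl, Ne.symm hl]
      · rw [Function.update_of_ne hb]
        simp [hb]
    rw [e4]
    apply comp_step l i₀ hl (-1)
    have e5 : Function.update (fun b => if b = l then x else if b = i₀ then x else 0) l
        ((fun b => if b = l then x else if b = i₀ then x else 0) l
          + (-1) * (fun b => if b = l then x else if b = i₀ then x else 0) i₀)
        = fun b => if b = i₀ then x else 0 := by
      funext b
      rcases eq_or_ne b l with rfl | hb
      · rw [Function.update_self]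
        simp [hl, Ne.symm hl]
      · rw [Function.update_of_ne hb]
        simp [hb]
    rw [e5]
    exact main x hx

lemma prim_transitive_aux (hn2 : 2 ≤ n) :
    ∀ (N : ℕ) (p : Fin n → ℤ), (∑ l, (p l).natAbs) ≤ N → PrimV p →
    ∃ A : SLZ n, (A : Matrix (Fin n) (Fin n) ℤ).mulVec p
      = Pi.single (⟨0, by omega⟩ : Fin n) (1:ℤ) := by
  intro N
  induction N using Nat.strong_induction_on with
  | _ N ih =>
    intro p hsum hprim
    set F := Finset.univ.filter (fun b => p b ≠ 0) with hF
    have hFne : F.Nonempty := by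
      rcases Finset.eq_empty_or_nonempty F with he | h
      · exfalso
        have hp0 : ∀ b, p b = 0 := by
          intro b
          by_contra hb
          have : b ∈ F := Finset.mem_filter.mpr ⟨Finset.mem_univ b, hb⟩
          rw [he] at this
          exact absurd this (Finset.notMem_empty b)
        have : Finset.univ.gcd p = 0 := Finset.gcd_eq_zero_iff.mpr (fun b _ => hp0 b)
        rw [hprim] at this
        exact one_ne_zero this
      · exact h
    rcases Nat.lt_or_ge F.card 2 with hc1 | hc2
    · -- exactly one nonzero coordinate
      have hcard1 : F.card = 1 := by
        have := Finset.Nonempty.card_pos hFne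
        omega
      obtain ⟨l, hl⟩ := Finset.card_eq_one.mp hcard1
      have hmem : ∀ b, b ∈ F ↔ b = l := by
        intro b
        rw [hl, Finset.mem_singleton]
      have hzero : ∀ b, b ≠ l → p b = 0 := by
        intro b hb
        by_contra h
        exact hb ((hmem b).mp (Finset.mem_filter.mpr ⟨Finset.mem_univ b, h⟩))
      have hform : p = fun b => if b = l then p l else 0 := by
        funext b
        rcases eq_or_ne b l with rfl | hb
        · simp
        · simp [hb, hzero b hb]
      have hdvd : p l ∣ Finset.univ.gcd p := by
        apply Finset.dvd_gcd
        intro b _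
        rcases eq_or_ne b l with rfl | hb
        · exact dvd_refl _
        · rw [hzero b hb]
          exact dvd_zero _
      rw [hprim] at hdvd
      have hpl : p l = 1 ∨ p l = -1 := Int.isUnit_iff.mp (isUnit_of_dvd_one hdvd)
      rw [hform]
      exact single_case hn2 l (p l) hpl
    · -- at least two nonzero coordinates
      obtain ⟨i, hiF, himax⟩ := Finset.exists_max_image F (fun b => (p b).natAbs) hFne
      have hEne : (F.erase i).Nonempty := by
        rw [← Finset.card_pos, Finset.card_erase_of_mem hiF]
        omega
      obtain ⟨j, hjE⟩ := hEne
      have hji : j ≠ i := (Finset.mem_erase.mp hjE).1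
      have hjF : j ∈ F := (Finset.mem_erase.mp hjE).2
      have hpj : p j ≠ 0 := (Finset.mem_filter.mp hjF).2
      have hpi : p i ≠ 0 := (Finset.mem_filter.mp hiF).2
      have hle : (p j).natAbs ≤ (p i).natAbs := himax j hjF
      set c : ℤ := -(p i / p j) with hc
      apply comp_step i j (Ne.symm hji) c
      have heq : p i + c * p j = p i % p j := by
        rw [hc, Int.emod_def]
        ring
      rw [heq]
      have hr0 : 0 ≤ p i % p j := Int.emod_nonneg _ hpj
      have hrlt : p i % p j < |p j| := Int.emod_lt_abs _ hpj
      have habs : |p j| ≤ |p i| := by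
        rw [Int.abs_eq_natAbs, Int.abs_eq_natAbs]
        exact_mod_cast hle
      have hnat : (p i % p j).natAbs < (p i).natAbs := by
        have h1 : p i % p j < |p i| := lt_of_lt_of_le hrlt habs
        rw [Int.abs_eq_natAbs] at h1
        omega
      have hupd : (fun b => (Function.update p i (p i % p j) b).natAbs)
          = Function.update (fun b => (p b).natAbs) i (p i % p j).natAbs := by
        funext b
        rcases eq_or_ne b i with rfl | hb
        · rw [Function.update_self, Function.update_self]
        · rw [Function.update_of_ne hb, Function.update_of_ne hb]
      have hsum' : (∑ l, (Function.update p i (p i % p j) l).natAbs) < N := by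
        have e1 : (∑ l, (Function.update p i (p i % p j) l).natAbs)
            = (p i % p j).natAbs + ∑ l ∈ Finset.univ.erase i, (p l).natAbs := by
          calc (∑ l, (Function.update p i (p i % p j) l).natAbs)
              = ∑ l, Function.update (fun b => (p b).natAbs) i (p i % p j).natAbs l := by
                rw [← hupd]
            _ = (p i % p j).natAbs + ∑ l ∈ Finset.univ.erase i, (p l).natAbs := by
                rw [Finset.sum_update_of_mem (Finset.mem_univ i), Finset.erase_eq]
        have e2 : (p i).natAbs + ∑ l ∈ Finset.univ.erase i, (p l).natAbs
            = ∑ l, (p l).natAbs := Finset.add_sum_erase _ (fun l => (p l).natAbs) (Finset.mem_univ i)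
        omega
      have hprim' : PrimV (Function.update p i (p i % p j)) := by
        unfold PrimV
        rw [← heq, gcd_update p i j (Ne.symm hji) c]
        exact hprim
      exact ih _ hsum' _ le_rfl hprim'

end Transitive

section Orbits
variable {n : ℕ}

lemma primV_ne_zero {p : Fin n → ℤ} (hp : PrimV p) : p ≠ 0 := by
  intro h
  have : Finset.univ.gcd p = 0 := Finset.gcd_eq_zero_iff.mpr (fun b _ => by rw [h]; rfl)
  rw [hp] at this
  exact one_ne_zero this

lemma int_gcd_eq_one_of_dvd_one {g : ℤ} (h0 : 0 ≤ g) (h : g ∣ 1) : g = 1 := by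
  rcases Int.isUnit_iff.mp (isUnit_of_dvd_one h) with h1 | h1
  · exact h1
  · omega

lemma primV_mulVec (A : SLZ n) {p : Fin n → ℤ} (hp : PrimV p) :
    PrimV ((A : Matrix (Fin n) (Fin n) ℤ).mulVec p) := by
  set q := (A : Matrix (Fin n) (Fin n) ℤ).mulVec p with hq
  have hpq : ((A⁻¹ : SLZ n) : Matrix (Fin n) (Fin n) ℤ).mulVec q = p := by
    rw [hq, Matrix.mulVec_mulVec, ← Matrix.SpecialLinearGroup.coe_mul, inv_mul_cancel,
      Matrix.SpecialLinearGroup.coe_one, Matrix.one_mulVec]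
  set g := Finset.univ.gcd q with hg
  have hdvd : ∀ l, g ∣ p l := by
    intro l
    rw [← hpq]
    show g ∣ ∑ b, ((A⁻¹ : SLZ n) : Matrix (Fin n) (Fin n) ℤ) l b * q b
    apply Finset.dvd_sum
    intro b _
    exact (Finset.gcd_dvd (Finset.mem_univ b)).mul_left _
  have hdvd1 : g ∣ 1 := by
    rw [← hp]
    exact Finset.dvd_gcd fun b _ => hdvd b
  exact int_gcd_eq_one_of_dvd_one (int_gcd_nonneg _ _) hdvd1

def PrimSub (n : ℕ) := {p : Fin n → ℤ // PrimV p}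

def osetoid (Γ : Subgroup (SLZ n)) : Setoid (PrimSub n) where
  r p q := ∃ γ ∈ Γ, ((γ : SLZ n) : Matrix (Fin n) (Fin n) ℤ).mulVec p.1 = q.1
  iseqv := by
    constructor
    · intro p
      exact ⟨1, Γ.one_mem, by rw [Matrix.SpecialLinearGroup.coe_one, Matrix.one_mulVec]⟩
    · rintro p q ⟨γ, hγ, hact⟩
      refine ⟨γ⁻¹, Γ.inv_mem hγ, ?_⟩
      rw [← hact, Matrix.mulVec_mulVec, ← Matrix.SpecialLinearGroup.coe_mul, inv_mul_cancel,
        Matrix.SpecialLinearGroup.coe_one, Matrix.one_mulVec]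
    · rintro p q r ⟨γ, hγ, hact⟩ ⟨δ, hδ, hact'⟩
      refine ⟨δ * γ, Γ.mul_mem hδ hγ, ?_⟩
      rw [Matrix.SpecialLinearGroup.coe_mul, ← Matrix.mulVec_mulVec, hact, hact']

def OQ (Γ : Subgroup (SLZ n)) := Quotient (osetoid Γ)

lemma OQ_finite (Γ : Subgroup (SLZ n)) (hn2 : 2 ≤ n) (hΓ : Γ.FiniteIndex) :
    Finite (OQ Γ) := by
  haveI : Finite (SLZ n ⧸ Γ) := Nat.finite_of_card_ne_zero hΓ.index_ne_zero
  haveI : Finite (Quotient (QuotientGroup.rightRel Γ)) :=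
    Finite.of_equiv _ (QuotientGroup.quotientRightRelEquivQuotientLeftRel Γ).symm
  have hp₀prim : PrimV (Pi.single (⟨0, by omega⟩ : Fin n) (1:ℤ)) := by
    unfold PrimV
    apply int_gcd_eq_one_of_dvd_one (int_gcd_nonneg _ _)
    have := Finset.gcd_dvd (f := Pi.single (⟨0, by omega⟩ : Fin n) (1:ℤ))
      (Finset.mem_univ (⟨0, by omega⟩ : Fin n))
    simpa using this
  set p₀ : PrimSub n := ⟨Pi.single (⟨0, by omega⟩ : Fin n) (1:ℤ), hp₀prim⟩ with hp₀
  set f : Quotient (QuotientGroup.rightRel Γ) → OQ Γ :=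
    Quotient.lift
      (fun A : SLZ n =>
        (Quotient.mk (osetoid Γ) ⟨(A : Matrix (Fin n) (Fin n) ℤ).mulVec p₀.1,
          primV_mulVec A p₀.2⟩ : OQ Γ))
      (by
        intro A B hAB
        have hmem : B * A⁻¹ ∈ Γ := QuotientGroup.rightRel_apply.mp hAB
        apply Quotient.sound
        refine ⟨B * A⁻¹, hmem, ?_⟩
        show ((B * A⁻¹ : SLZ n) : Matrix (Fin n) (Fin n) ℤ).mulVec
            ((A : Matrix (Fin n) (Fin n) ℤ).mulVec p₀.1)
          = (B : Matrix (Fin n) (Fin n) ℤ).mulVec p₀.1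
        rw [Matrix.mulVec_mulVec, ← Matrix.SpecialLinearGroup.coe_mul, mul_assoc,
          inv_mul_cancel, mul_one]) with hf
  apply Finite.of_surjective f
  intro qq
  obtain ⟨p, rfl⟩ := Quotient.exists_rep qq
  obtain ⟨A, hA⟩ := prim_transitive_aux hn2 (∑ l, (p.1 l).natAbs) p.1 le_rfl p.2
  refine ⟨Quotient.mk (QuotientGroup.rightRel Γ) A⁻¹, ?_⟩
  show Quotient.mk (osetoid Γ) ⟨((A⁻¹ : SLZ n) : Matrix (Fin n) (Fin n) ℤ).mulVec p₀.1,
      primV_mulVec A⁻¹ p₀.2⟩ = Quotient.mk (osetoid Γ) p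
  have hval : ((A⁻¹ : SLZ n) : Matrix (Fin n) (Fin n) ℤ).mulVec p₀.1 = p.1 := by
    have hp₀v : p₀.1 = (A : Matrix (Fin n) (Fin n) ℤ).mulVec p.1 := hA.symm
    rw [hp₀v, Matrix.mulVec_mulVec, ← Matrix.SpecialLinearGroup.coe_mul, inv_mul_cancel,
      Matrix.SpecialLinearGroup.coe_one, Matrix.one_mulVec]
  exact congrArg _ (Subtype.ext hval)

end Orbits

section Final
variable {n : ℕ}

lemma lact_smul (g : SLR n) (t : ℝ) (x : V n) : lact g (t • x) = t • lact g x := by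
  simp [lact, Matrix.mulVec_smul]

lemma slCast_coe (γ : SLZ n) :
    ((slCast γ : SLR n) : Matrix (Fin n) (Fin n) ℝ)
      = (γ : Matrix (Fin n) (Fin n) ℤ).map Int.cast := rfl

lemma lact_slCast_cast (γ : SLZ n) (p : Fin n → ℤ) :
    lact (slCast γ) (fun l => ((p l : ℝ)))
      = fun l => ((((γ : Matrix (Fin n) (Fin n) ℤ).mulVec p) l : ℝ)) := by
  funext l
  rw [lact, slCast_coe]
  simp only [Matrix.mulVec, dotProduct, Matrix.map_apply]
  push_cast
  rfl

lemma lact_inv_cancel (γ : SLZ n) (x : V n) :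
    lact (slCast γ⁻¹) (lact (slCast γ) x) = x := by
  rw [← lact_mul, ← _root_.map_mul, inv_mul_cancel, _root_.map_one, lact_one]


/-- For a finite-index subgroup `Γ` of `SL(n,ℤ)`, `n ≥ 3`, every nonempty
proper closed `Γ`-invariant subset of `ℝⁿ ∖ {0}` is a finite union of sets of the form
`Γ·(F·u)` with `u` a nonzero rational vector and `F ⊆ [0,∞)` closed with `0 ∉ F`. -/
theorem statement_4 (n : ℕ) (hn : 3 ≤ n) (Γ : Subgroup (SLZ n)) (hΓ : Γ.FiniteIndex)
    (C : Set (V n)) (hsub : C ⊆ {v : V n | v ≠ 0}) (hne : C.Nonempty)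
    (hproper : C ≠ {v : V n | v ≠ 0})
    (hclosed : IsClosed (Subtype.val ⁻¹' C : Set {v : V n // v ≠ 0}))
    (hinv : ∀ γ ∈ Γ, ∀ v ∈ C, lact (slCast γ) v ∈ C) :
    ∃ (k : ℕ) (u : Fin k → (Fin n → ℚ)) (F : Fin k → Set ℝ),
      (∀ i, u i ≠ 0) ∧
      (∀ i, IsClosed (F i) ∧ F i ⊆ Ici (0:ℝ) ∧ (0:ℝ) ∉ F i) ∧
      C = ⋃ i, {w : V n | ∃ γ ∈ Γ, ∃ t ∈ F i, w = lact (slCast γ) (t • fun j => ((u i j : ℝ)))} := by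
  have hn2 : 2 ≤ n := by omega
  obtain ⟨ε, hεpos, hεC⟩ := eps_bound hΓ hn hsub hclosed hinv hproper
  haveI hfin : Finite (OQ Γ) := OQ_finite Γ hn2 hΓ
  obtain ⟨k, ⟨e⟩⟩ := Finite.exists_equiv_fin (OQ Γ)
  set rep : Fin k → PrimSub n := fun i => Quotient.out (e.symm i) with hrep
  set U : Fin k → V n := fun i => fun l => (((rep i).1 l : ℝ)) with hU
  set u : Fin k → (Fin n → ℚ) := fun i => fun l => (((rep i).1 l : ℚ)) with hu
  set F : Fin k → Set ℝ := fun i => {t : ℝ | 0 < t ∧ t • U i ∈ C} with hF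
  have hUcast : ∀ i, (fun j => ((u i j : ℝ))) = U i := by
    intro i
    funext j
    rw [hu, hU]
    push_cast
    rfl
  have hUne : ∀ i, U i ≠ 0 := by
    intro i h
    apply primV_ne_zero (rep i).2
    funext l
    have h1 := congrFun h l
    rw [hU] at h1
    simp only [Pi.zero_apply] at h1
    exact_mod_cast h1
  have hUpos : ∀ i, 0 < ‖U i‖ := fun i => norm_pos_iff.mpr (hUne i)
  have hFmem : ∀ i t, t ∈ F i ↔ 0 < t ∧ t • U i ∈ C := by
    intro i t
    rw [hF]
    rfl
  have hFsub : ∀ i, F i ⊆ Ici (ε / ‖U i‖) := by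
    intro i t ht
    obtain ⟨ht0, htC⟩ := (hFmem i t).mp ht
    have h1 : ε ≤ ‖t • U i‖ := hεC _ htC
    rw [norm_smul, Real.norm_eq_abs, abs_of_pos ht0] at h1
    rw [mem_Ici]
    exact (div_le_iff₀ (hUpos i)).mpr (by linarith)
  have hFclosed : ∀ i, IsClosed (F i) := by
    intro i
    apply isClosed_of_closure_subset
    intro t ht
    have htI : t ∈ Ici (ε / ‖U i‖) := by
      have h1 := closure_mono (hFsub i) ht
      rwa [closure_Ici] at h1
    have ht0 : 0 < t := lt_of_lt_of_le (div_pos hεpos (hUpos i)) htI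
    have htC : t • U i ∈ C := by
      apply mem_of_closure hsub hclosed (smul_ne_zero ht0.ne' (hUne i))
      have hcont : Continuous (fun s : ℝ => s • U i) := continuous_id.smul continuous_const
      have himg : (fun s : ℝ => s • U i) '' (F i) ⊆ C := by
        rintro _ ⟨s, hs, rfl⟩
        exact ((hFmem i s).mp hs).2
      have h2 := image_closure_subset_closure_image hcont (s := F i) ⟨t, ht, rfl⟩
      exact closure_mono himg h2
    exact (hFmem i t).mpr ⟨ht0, htC⟩
  refine ⟨k, u, F, ?_, ?_, ?_⟩
  · intro i h
    apply primV_ne_zero (rep i).2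
    funext l
    have h1 := congrFun h l
    rw [hu] at h1
    simp only [Pi.zero_apply] at h1
    exact_mod_cast h1
  · intro i
    refine ⟨hFclosed i, ?_, ?_⟩
    · intro t ht
      exact le_of_lt ((hFmem i t).mp ht).1
    · intro h
      exact lt_irrefl 0 ((hFmem i 0).mp h).1
  · apply Set.Subset.antisymm
    · intro v hv
      obtain ⟨t, p, ht0, hprim, hvt⟩ := rational_struct hΓ hn hsub hclosed hinv hproper hv
      set P : PrimSub n := ⟨p, hprim⟩ with hP
      set i : Fin k := e (Quotient.mk (osetoid Γ) P) with hi
      have hrel : (osetoid Γ).r (rep i) P := by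
        apply Quotient.exact (s := osetoid Γ)
        have h1 : e.symm i = Quotient.mk (osetoid Γ) P := by rw [hi]; exact e.symm_apply_apply _
        rw [← h1, hrep]; exact Quotient.out_eq _
      obtain ⟨γ, hγ, hact⟩ := hrel
      have hcastp : (fun l => ((p l : ℝ))) = lact (slCast γ) (U i) := by
        rw [hU, lact_slCast_cast γ (rep i).1, hact]
      have hveq : v = lact (slCast γ) (t • U i) := by
        rw [lact_smul, hvt, hcastp]
      have htF : t ∈ F i := by
        refine (hFmem i t).mpr ⟨ht0, ?_⟩
        have h2 := hinv γ⁻¹ (Γ.inv_mem hγ) v hv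
        rw [hveq, lact_inv_cancel] at h2
        exact h2
      rw [mem_iUnion]
      refine ⟨i, γ, hγ, t, htF, ?_⟩
      rw [hUcast i]
      exact hveq
    · intro w hw
      rw [mem_iUnion] at hw
      obtain ⟨i, γ, hγ, t, htF, rfl⟩ := hw
      rw [hUcast i]
      exact hinv γ hγ _ ((hFmem i t).mp htF).2

end Final
end Zeghib
end
end

section
/- Let n ≥ 3 and let Γ be a finite-index subgroup of SL(n,ℤ), acting linearly on ℝⁿ. Then every Γ-invariant open subset of ℝⁿ containing 0 is connected. -/
open Set Filter Topology MeasureTheory Matrix Function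
noncomputable section
namespace Zeghib

def Emat {n : ℕ} (i j : Fin n) (h : i ≠ j) (c : ℤ) : SLZ n :=
  ⟨Matrix.transvection i j c, Matrix.det_transvection_of_ne i j h c⟩

lemma Emat_mul {n : ℕ} (i j : Fin n) (h : i ≠ j) (c d : ℤ) :
    Emat i j h c * Emat i j h d = Emat i j h (c + d) :=
  Subtype.ext (Matrix.transvection_mul_transvection_same i j h c d)

lemma Emat_zero {n : ℕ} (i j : Fin n) (h : i ≠ j) : Emat i j h 0 = 1 :=
  Subtype.ext (Matrix.transvection_zero i j)

lemma Emat_pow {n : ℕ} (i j : Fin n) (h : i ≠ j) (c : ℤ) (a : ℕ) :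
    Emat i j h c ^ a = Emat i j h (a * c) := by
  induction a with
  | zero => simp [Emat_zero i j h]
  | succ a ih => rw [pow_succ, ih, Emat_mul]; congr 1; push_cast; ring

lemma Emat_inv {n : ℕ} (i j : Fin n) (h : i ≠ j) (c : ℤ) :
    (Emat i j h c)⁻¹ = Emat i j h (-c) := by
  symm
  apply eq_inv_of_mul_eq_one_left
  rw [Emat_mul, neg_add_cancel, Emat_zero]

lemma coe_slCast_Emat {n : ℕ} (i j : Fin n) (h : i ≠ j) (c : ℤ) :
    (slCast (Emat i j h c) : Matrix (Fin n) (Fin n) ℝ) = Matrix.transvection i j (c : ℝ) := by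
  have : (slCast (Emat i j h c) : Matrix (Fin n) (Fin n) ℝ)
      = ((Emat i j h c : Matrix (Fin n) (Fin n) ℤ)).map (Int.castRingHom ℝ) :=
    Matrix.SpecialLinearGroup.map_apply_coe _ _
  rw [this]
  ext a b
  simp [Emat, Matrix.transvection, Matrix.map_apply, Matrix.one_apply, Matrix.single]

lemma lact_Emat {n : ℕ} (i j : Fin n) (h : i ≠ j) (c : ℤ) (v : V n) :
    lact (slCast (Emat i j h c)) v = Function.update v i (v i + (c : ℝ) * v j) := by
  rw [lact, coe_slCast_Emat, Matrix.transvection, Matrix.add_mulVec, Matrix.one_mulVec,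
    Matrix.single_mulVec]
  funext k
  rcases eq_or_ne k i with rfl | hk
  · simp
  · simp [hk, Function.update_of_ne hk]

lemma reduce_coords {n : ℕ} (Γ : Subgroup (SLZ n)) (m : ℕ) (hm : 0 < m)
    (hE : ∀ (i j : Fin n) (h : i ≠ j) (k : ℤ), Emat i j h (k * m) ∈ Γ)
    (i2 : Fin n) (v : V n) (δ : ℝ) (hv2 : 0 < v i2) (hδ : (m : ℝ) * v i2 < δ) :
    ∀ s : Finset (Fin n), i2 ∉ s → ∃ γ ∈ Γ,
      (∀ j ∈ s, |lact (slCast γ) v j| < δ) ∧ (∀ j ∉ s, lact (slCast γ) v j = v j) := by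
  classical
  intro s
  induction s using Finset.induction_on with
  | empty =>
    intro _
    refine ⟨1, one_mem Γ, by simp, fun j _ => ?_⟩
    simp only [_root_.map_one, lact_one]
  | @insert j0 s hj0s ih =>
    intro hins
    have hi2s : i2 ∉ s := fun hh => hins (Finset.mem_insert_of_mem hh)
    have hj0i2 : j0 ≠ i2 := fun hh => hins (hh ▸ Finset.mem_insert_self j0 s)
    obtain ⟨γ, hγ, hsmall, hfix⟩ := ih hi2s
    have hui2 : lact (slCast γ) v i2 = v i2 := hfix i2 hi2s
    have huj0 : lact (slCast γ) v j0 = v j0 := hfix j0 hj0s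
    set c : ℝ := (m : ℝ) * v i2 with hc
    have hc0 : 0 < c := by positivity
    set k : ℤ := -round (v j0 / c) with hk
    have hkey : |v j0 + (k : ℝ) * c| ≤ c / 2 := by
      have h1 : |v j0 / c - round (v j0 / c)| ≤ 1 / 2 := abs_sub_round _
      have h2 : v j0 + (k : ℝ) * c = c * (v j0 / c - round (v j0 / c)) := by
        rw [hk]
        push_cast
        field_simp
        ring
      rw [h2, abs_mul, abs_of_pos hc0]
      calc c * |v j0 / c - round (v j0 / c)| ≤ c * (1 / 2) := by
            exact mul_le_mul_of_nonneg_left h1 hc0.le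
        _ = c / 2 := by ring
    have hkδ : |v j0 + (k : ℝ) * c| < δ := lt_of_le_of_lt hkey (by linarith)
    refine ⟨Emat j0 i2 hj0i2 (k * m) * γ, mul_mem (hE _ _ _ _) hγ, ?_, ?_⟩
    · intro j hj
      rw [_root_.map_mul, lact_mul, lact_Emat]
      rcases eq_or_ne j j0 with rfl | hjj0
      · rw [Function.update_self, huj0, hui2]
        calc |v j + ((k * m : ℤ) : ℝ) * v i2| = |v j + (k : ℝ) * c| := by
              rw [hc]; push_cast; ring_nf
          _ < δ := hkδ
      · rw [Function.update_of_ne hjj0]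
        exact hsmall j ((Finset.mem_insert.1 hj).resolve_left hjj0)
    · intro j hj
      have hjj0 : j ≠ j0 := fun hh => hj (hh ▸ Finset.mem_insert_self j0 s)
      have hjs : j ∉ s := fun hh => hj (Finset.mem_insert_of_mem hh)
      rw [_root_.map_mul, lact_mul, lact_Emat, Function.update_of_ne hjj0]
      exact hfix j hjs

lemma orbit_small {n : ℕ} (Γ : Subgroup (SLZ n)) (m : ℕ) (hm : 0 < m)
    (hE : ∀ (i j : Fin n) (h : i ≠ j) (k : ℤ), Emat i j h (k * m) ∈ Γ)
    (i0 i1 i2 : Fin n) (h02 : i0 ≠ i2) (h12 : i1 ≠ i2)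
    (v : V n) (hb : v i1 ≠ 0) (hirr : Irrational (v i0 / v i1))
    (δ : ℝ) (hδ : 0 < δ) :
    ∃ γ ∈ Γ, ∀ j, |lact (slCast γ) v j| < δ := by
  classical
  have hm' : (0 : ℝ) < m := by exact_mod_cast hm
  set a : ℝ := (m : ℝ) * v i0 with ha
  set b : ℝ := (m : ℝ) * v i1 with hb'
  have hbne : b ≠ 0 := mul_ne_zero (ne_of_gt hm') hb
  have hdense : Dense ((AddSubgroup.closure {a, b} : AddSubgroup ℝ) : Set ℝ) := by
    rcases AddSubgroup.dense_or_cyclic (AddSubgroup.closure {a, b}) with h | ⟨x, hx⟩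
    · exact h
    · exfalso
      have hamem : a ∈ AddSubgroup.closure ({a, b} : Set ℝ) :=
        AddSubgroup.subset_closure (by simp)
      have hbmem : b ∈ AddSubgroup.closure ({a, b} : Set ℝ) :=
        AddSubgroup.subset_closure (by simp)
      rw [hx] at hamem hbmem
      obtain ⟨p, hp⟩ := AddSubgroup.mem_closure_singleton.1 hamem
      obtain ⟨q, hq⟩ := AddSubgroup.mem_closure_singleton.1 hbmem
      rw [zsmul_eq_mul] at hp hq
      have hx0 : x ≠ 0 := by
        intro h0; rw [h0, mul_zero] at hq; exact hbne hq.symm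
      have hq0 : (q : ℝ) ≠ 0 := by
        intro h0; rw [h0, zero_mul] at hq; exact hbne hq.symm
      apply hirr
      refine ⟨(p : ℚ) / (q : ℚ), ?_⟩
      have hratio : v i0 / v i1 = a / b := by
        rw [ha, hb', mul_div_mul_left _ _ (ne_of_gt hm')]
      rw [hratio, ← hp, ← hq]
      push_cast
      field_simp
  set δ2 : ℝ := δ / (2 * (m + 1)) with hδ2
  have hδ2pos : 0 < δ2 := by positivity
  obtain ⟨s, hsmem, hsIoo⟩ := hdense.exists_between
    (show δ2 - v i2 < 2 * δ2 - v i2 by linarith)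
  obtain ⟨k, l, hkl⟩ := AddSubgroup.mem_closure_pair.1 hsmem
  rw [zsmul_eq_mul, zsmul_eq_mul] at hkl
  set w2 : ℝ := v i2 + s with hw2
  have hw2pos : 0 < w2 := by
    have := hsIoo.1; simp only [hw2]; linarith
  have hw2lt : w2 < 2 * δ2 := by
    have := hsIoo.2; simp only [hw2]; linarith
  have hmw2 : (m : ℝ) * w2 < δ := by
    have h1 : (m : ℝ) * w2 < (m : ℝ) * (2 * δ2) := by
      exact mul_lt_mul_of_pos_left hw2lt hm'
    have h2 : (m : ℝ) * (2 * δ2) = δ * (m / (m + 1)) := by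
      rw [hδ2]; field_simp
    have h3 : δ * ((m : ℝ) / (m + 1)) < δ := by
      have : (m : ℝ) / (m + 1) < 1 := by
        rw [div_lt_one (by positivity)]; linarith
      nlinarith
    linarith
  have hw2δ : w2 < δ := by
    have : (m : ℝ) * w2 ≥ 1 * w2 := by
      apply mul_le_mul_of_nonneg_right _ hw2pos.le
      exact_mod_cast hm
    linarith
  -- the element putting w2 in coordinate i2
  set γ1 : SLZ n := Emat i2 i0 (Ne.symm h02) (k * m) * Emat i2 i1 (Ne.symm h12) (l * m) with hγ1
  have hγ1mem : γ1 ∈ Γ := mul_mem (hE _ _ _ _) (hE _ _ _ _)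
  set v1 : V n := lact (slCast γ1) v with hv1
  have hv1eq : v1 = Function.update v i2 w2 := by
    rw [hv1, hγ1, _root_.map_mul, lact_mul, lact_Emat, lact_Emat]
    rw [Function.update_of_ne h02, Function.update_self, Function.update_idem]
    have he : v i2 + ((l * m : ℤ) : ℝ) * v i1 + ((k * m : ℤ) : ℝ) * v i0 = w2 := by
      rw [hw2, ← hkl, ha, hb']; push_cast; ring
    rw [he]
  have hv1i2 : v1 i2 = w2 := by rw [hv1eq, Function.update_self]
  obtain ⟨γ2, hγ2mem, hγ2small, hγ2fix⟩ := reduce_coords Γ m hm hE i2 v1 δ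
    (by rw [hv1i2]; exact hw2pos) (by rw [hv1i2]; exact hmw2)
    (Finset.univ.erase i2) (Finset.notMem_erase i2 _)
  refine ⟨γ2 * γ1, mul_mem hγ2mem hγ1mem, fun j => ?_⟩
  rw [_root_.map_mul, lact_mul, ← hv1]
  rcases eq_or_ne j i2 with rfl | hj
  · rw [hγ2fix j (Finset.notMem_erase j _), hv1i2, abs_of_pos hw2pos]
    exact hw2δ
  · exact hγ2small j (Finset.mem_erase.2 ⟨hj, Finset.mem_univ j⟩)

lemma Emat_zpow {n : ℕ} (i j : Fin n) (h : i ≠ j) (c : ℤ) : ∀ k : ℤ,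
    Emat i j h c ^ k = Emat i j h (k * c)
  | Int.ofNat a => by
    rw [Int.ofNat_eq_coe, zpow_natCast, Emat_pow]
  | Int.negSucc a => by
    rw [zpow_negSucc, Emat_pow, Emat_inv]
    congr 1
    rw [Int.negSucc_eq]
    push_cast
    ring

lemma lact_continuous {n : ℕ} (g : SLR n) : Continuous (lact g) := by
  have : lact g = fun v => Matrix.mulVecLin (g : Matrix (Fin n) (Fin n) ℝ) v := by
    funext v; simp [lact, Matrix.mulVecLin_apply]
  rw [this]
  exact LinearMap.continuous_of_finiteDimensional _ |>.comp continuous_id |>.congr (fun _ => rfl)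

lemma lact_zero {n : ℕ} (g : SLR n) : lact g (0 : V n) = 0 := Matrix.mulVec_zero _


/-- For a finite-index subgroup `Γ` of `SL(n,ℤ)`, `n ≥ 3`, every
`Γ`-invariant open subset of `ℝⁿ` containing `0` is connected. -/
theorem statement_5 (n : ℕ) (hn : 3 ≤ n) (Γ : Subgroup (SLZ n)) (hΓ : Γ.FiniteIndex)
    (U : Set (V n)) (hU : IsOpen U) (h0 : (0 : V n) ∈ U)
    (hinv : ∀ γ ∈ Γ, ∀ v ∈ U, lact (slCast γ) v ∈ U) :
    IsConnected U := by
  classical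
  haveI := hΓ
  set m := Γ.normalCore.index with hmdef
  have hFI : Γ.normalCore.FiniteIndex := inferInstance
  have hm : 0 < m := Nat.pos_of_ne_zero hFI.index_ne_zero
  have hE : ∀ (i j : Fin n) (h : i ≠ j) (k : ℤ), Emat i j h (k * m) ∈ Γ := by
    intro i j h k
    have h1 : Emat i j h m ∈ Γ := by
      have h2 := Subgroup.pow_index_mem Γ.normalCore (Emat i j h 1)
      rw [Emat_pow] at h2
      have h3 := Γ.normalCore_le h2
      simpa using h3
    have h4 : Emat i j h (m : ℤ) ^ k = Emat i j h (k * m) := Emat_zpow i j h m k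
    rw [← h4]
    exact zpow_mem h1 k
  set C := connectedComponentIn U 0 with hC
  have hCopen : IsOpen C := hU.connectedComponentIn
  have h0C : (0 : V n) ∈ C := mem_connectedComponentIn h0
  have hCU : C ⊆ U := connectedComponentIn_subset U 0
  obtain ⟨δ, hδ0, hδC⟩ := Metric.isOpen_iff.1 hCopen 0 h0C
  have key : U ⊆ C := by
    intro x hx
    obtain ⟨ε, hε0, hεU⟩ := Metric.isOpen_iff.1 hU x hx
    set i0 : Fin n := ⟨0, by omega⟩ with hi0
    set i1 : Fin n := ⟨1, by omega⟩ with hi1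
    set i2 : Fin n := ⟨2, by omega⟩ with hi2
    have h01 : i0 ≠ i1 := by simp [hi0, hi1, Fin.ext_iff]
    have h02 : i0 ≠ i2 := by simp [hi0, hi2, Fin.ext_iff]
    have h12 : i1 ≠ i2 := by simp [hi1, hi2, Fin.ext_iff]
    obtain ⟨q1, hq1a, hq1b⟩ := exists_rat_btwn (show x i0 - ε < x i0 by linarith)
    obtain ⟨q2, hq2a, hq2b⟩ := exists_rat_btwn (show x i0 < x i0 + ε by linarith)
    obtain ⟨β, hβirr, hβa, hβb⟩ : ∃ β : ℝ, Irrational β ∧ x i1 - ε < β ∧ β < x i1 + ε := by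
      obtain ⟨β, hβ, hβ2⟩ := dense_irrational.exists_between
        (show x i1 - ε < x i1 + ε by linarith)
      exact ⟨β, hβ, hβ2.1, hβ2.2⟩
    obtain ⟨q, hq0, hqa, hqb⟩ : ∃ q : ℚ, q ≠ 0 ∧ x i0 - ε < (q : ℝ) ∧ (q : ℝ) < x i0 + ε := by
      rcases eq_or_ne q1 0 with rfl | hne
      · refine ⟨q2, ?_, by linarith, by linarith⟩
        intro hq2
        rw [hq2] at hq2a
        push_cast at hq2a hq1b
        linarith
      · exact ⟨q1, hne, by linarith, by linarith⟩
    set y : V n := Function.update (Function.update x i0 (q : ℝ)) i1 β with hy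
    have hyi0 : y i0 = (q : ℝ) := by
      rw [hy, Function.update_of_ne h01, Function.update_self]
    have hyi1 : y i1 = β := by rw [hy, Function.update_self]
    have hyball : y ∈ Metric.ball x ε := by
      rw [Metric.mem_ball, dist_pi_lt_iff hε0]
      intro j
      rcases eq_or_ne j i1 with rfl | hj1
      · rw [hyi1, Real.dist_eq, abs_lt]; constructor <;> linarith
      rcases eq_or_ne j i0 with rfl | hj0
      · rw [hyi0, Real.dist_eq, abs_lt]; constructor <;> linarith
      · have : y j = x j := by
          rw [hy, Function.update_of_ne hj1, Function.update_of_ne hj0]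
        rw [this, dist_self]; exact hε0
    have hbne : y i1 ≠ 0 := by rw [hyi1]; exact hβirr.ne_zero
    have hirr : Irrational (y i0 / y i1) := by
      rw [hyi0, hyi1]
      exact hβirr.ratCast_div hq0
    obtain ⟨γ, hγΓ, hsmall⟩ := orbit_small Γ m hm hE i0 i1 i2 h02 h12 y hbne hirr δ hδ0
    have hγy : lact (slCast γ) y ∈ C := by
      apply hδC
      rw [Metric.mem_ball, dist_pi_lt_iff hδ0]
      intro j
      rw [Real.dist_eq]
      simpa using hsmall j
    have hconn : IsPreconnected (Metric.ball x ε) := (convex_ball x ε).isPreconnected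
    have himg : lact (slCast γ) '' Metric.ball x ε ⊆ C := by
      have hpre : IsPreconnected (lact (slCast γ) '' Metric.ball x ε ∪ C) := by
        apply IsPreconnected.union (lact (slCast γ) y)
        · exact mem_image_of_mem _ hyball
        · exact hγy
        · exact hconn.image _ (lact_continuous _).continuousOn
        · exact isPreconnected_connectedComponentIn
      have hsub : lact (slCast γ) '' Metric.ball x ε ∪ C ⊆ U := by
        rintro z (⟨w, hw, rfl⟩ | hz)
        · exact hinv γ hγΓ w (hεU hw)
        · exact hCU hz
      have h5 := hpre.subset_connectedComponentIn (Or.inr h0C) hsub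
      exact subset_union_left.trans h5
    have hinvC : lact (slCast γ⁻¹) '' C ⊆ C := by
      have hpre : IsPreconnected (lact (slCast γ⁻¹) '' C ∪ C) := by
        apply IsPreconnected.union (0 : V n)
        · exact ⟨0, h0C, lact_zero _⟩
        · exact h0C
        · exact isPreconnected_connectedComponentIn.image _ (lact_continuous _).continuousOn
        · exact isPreconnected_connectedComponentIn
      have hsub : lact (slCast γ⁻¹) '' C ∪ C ⊆ U := by
        rintro z (⟨w, hw, rfl⟩ | hz)
        · exact hinv γ⁻¹ (inv_mem hγΓ) w (hCU hw)
        · exact hCU hz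
      have h5 := hpre.subset_connectedComponentIn (Or.inr h0C) hsub
      exact subset_union_left.trans h5
    have hx1 : lact (slCast γ) x ∈ C := himg (mem_image_of_mem _ (Metric.mem_ball_self hε0))
    have hx2 : lact (slCast γ⁻¹) (lact (slCast γ) x) = x := by
      rw [← lact_mul, ← _root_.map_mul, inv_mul_cancel, _root_.map_one, lact_one]
    have : x ∈ C := by
      rw [← hx2]; exact hinvC (mem_image_of_mem _ hx1)
    exact this
  have hUC : U = C := Subset.antisymm key hCU
  rw [hUC]
  exact isConnected_connectedComponentIn_iff.2 h0
end Zeghib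
end
end
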